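/- arXiv:2505.21331 — 3 statements merged into one kernel-verified Lean document; each statement's English description precedes it below -/
import Mathlib

section
/- Let γ* be a minimizer of γ ↦ μ·γ − λ·V(γ, r) over γ ≥ 0, and let o be any priority ordering of the states that lists every state i with c(i) + V^f(γ*, i) > γ* before every state i with c(i) + V^f(γ*, i) = γ*, and lists all states of these two classes before every state i with c(i) + V^f(γ*, i) < γ*. Then the fluid equilibrium of o attains the optimal fluid cost: Σ_{i∈S} c(i)·(q^o_i − ν^o_i) = C*. In particular, the equilibrium of the OaRC priority ordering (which ranks states in decreasing order of c(i) + V^f(γ*, i)) is an optimal solution of OriginalFluid. -/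
open scoped Classical
open Finset

/-- A finite tree-structured Markov chain: a finite state space partitioned into
levels `0, …, L-1`, a root `r` at level `0`, a parent map `pa` (with `pa r = r` by
convention), and transition probabilities `p i ∈ (0,1]` of being reached from the
parent, with `p r = 1`. -/
structure TreeMC (S : Type*) [Fintype S] [DecidableEq S] where
  /-- the number of levels -/
  L : ℕ
  /-- the root -/
  r : S
  /-- the parent map (with `pa r = r` by convention) -/
  pa : S → S
  /-- the level of each state -/
  level : S → ℕ
  /-- the probability of being reached from the parent -/
  p : S → ℝ
  level_lt : ∀ i, level i < L
  level_r : level r = 0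
  root_unique : ∀ i, level i = 0 → i = r
  pa_r : pa r = r
  level_pa : ∀ i, i ≠ r → level (pa i) + 1 = level i
  p_pos : ∀ i, 0 < p i
  p_le_one : ∀ i, p i ≤ 1
  p_r : p r = 1

namespace TreeMC

variable {S : Type*} [Fintype S] [DecidableEq S] (M : TreeMC S)

/-- The ancestors of `i`: states on the path from the root to `i` (both included). -/
noncomputable def anc (i : S) : Finset S :=
  Finset.univ.filter fun a => ∃ n : ℕ, M.pa^[n] i = a

/-- The subtree of `i`: all states having `i` as an ancestor. -/
noncomputable def subt (i : S) : Finset S :=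
  Finset.univ.filter fun k => i ∈ M.anc k

/-- The subtree of a set of states. -/
noncomputable def subF (X : Finset S) : Finset S :=
  Finset.univ.filter fun k => ∃ i ∈ X, k ∈ M.subt i

/-- `π i`: the probability that a job passes through state `i`. -/
noncomputable def pi (i : S) : ℝ :=
  ∏ a ∈ M.anc i, M.p a

/-- The children of `i`. -/
noncomputable def child (i : S) : Finset S :=
  Finset.univ.filter fun k => k ≠ M.r ∧ M.pa k = i

/-- `T` is the top set of `X`: a subset of `X` whose subtree covers `X` and in which
no state lies in the subtree of a different state. -/
def IsTopSet (X T : Finset S) : Prop :=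
  T ⊆ X ∧ X ⊆ M.subF T ∧ ∀ i ∈ T, ∀ k ∈ T, i ≠ k → k ∉ M.subt i

/-- Expected future cost conditional on being in state `a`. -/
noncomputable def cf (c : S → ℝ) (a : S) : ℝ :=
  ∑ i ∈ M.subt a, c i * M.pi i / M.pi a

/-- `V` is the ski-rental value function:
`V γ i = min (γ, c i + Σ_{k ∈ child i} p k · V γ k)`. -/
def IsSkiValue (c : S → ℝ) (V : ℝ → S → ℝ) : Prop :=
  ∀ γ : ℝ, ∀ i : S, V γ i = min γ (c i + ∑ k ∈ M.child i, M.p k * V γ k)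

/-- Expected future cost-to-go `V^f`. -/
noncomputable def Vf (V : ℝ → S → ℝ) (γ : ℝ) (i : S) : ℝ :=
  ∑ k ∈ M.child i, M.p k * V γ k

/-- The candidate optimal state duals `β*(γ)`. -/
noncomputable def betaStar (c : S → ℝ) (V : ℝ → S → ℝ) (γ : ℝ) (i : S) : ℝ :=
  max 0 (c i + M.Vf V γ i - γ)

/-- Feasibility for the dual program `D*(γ)`. -/
def DualFeasible (c : S → ℝ) (γ : ℝ) (β : S → ℝ) : Prop :=
  (∀ i, 0 ≤ β i) ∧ ∀ a, M.cf c a ≤ γ + ∑ i ∈ M.subt a, β i * M.pi i / M.pi a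

/-- Feasibility for the fluid LP (OriginalFluid). -/
def OrigFeasible (lam mu : ℝ) (q ν : S → ℝ) : Prop :=
  (∀ i, 0 ≤ q i) ∧ (∀ i, 0 ≤ ν i) ∧ q M.r = lam ∧
    (∀ i, i ≠ M.r → q i = (q (M.pa i) - ν (M.pa i)) * M.p i) ∧
    (∀ i, ν i ≤ q i) ∧ ∑ i : S, ν i ≤ mu

/-- Feasibility for the fluid LP (SimplerFluid). -/
def SimpFeasible (lam mu : ℝ) (ν : S → ℝ) : Prop :=
  (∀ i, 0 ≤ ν i) ∧ (∀ i, ∑ a ∈ M.anc i, ν a * M.pi i / M.pi a ≤ lam * M.pi i) ∧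
    ∑ i : S, ν i ≤ mu

end TreeMC

section Aux
namespace TreeMC

variable {S : Type*} [Fintype S] [DecidableEq S] (M : TreeMC S)

lemma mem_anc {a i : S} : a ∈ M.anc i ↔ ∃ n : ℕ, M.pa^[n] i = a := by
  simp [anc]

lemma anc_self (i : S) : i ∈ M.anc i := M.mem_anc.2 ⟨0, rfl⟩

lemma pa_mem_anc (i : S) : M.pa i ∈ M.anc i := M.mem_anc.2 ⟨1, rfl⟩

lemma level_pa_le (i : S) : M.level (M.pa i) ≤ M.level i := by
  by_cases h : i = M.r
  · subst h; rw [M.pa_r]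
  · have := M.level_pa i h; omega

lemma level_le_of_mem_anc {a i : S} (h : a ∈ M.anc i) : M.level a ≤ M.level i := by
  obtain ⟨n, rfl⟩ := M.mem_anc.1 h
  clear h
  induction n with
  | zero => simp
  | succ n ih =>
    rw [Function.iterate_succ_apply']
    exact le_trans (M.level_pa_le _) ih

lemma pa_iterate_root (n : ℕ) : M.pa^[n] M.r = M.r := by
  induction n with
  | zero => rfl
  | succ n ih => rw [Function.iterate_succ_apply, M.pa_r, ih]

lemma anc_root : M.anc M.r = {M.r} := by
  ext a
  simp only [mem_anc, Finset.mem_singleton]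
  constructor
  · rintro ⟨n, rfl⟩; exact M.pa_iterate_root n
  · rintro rfl; exact ⟨0, rfl⟩

lemma anc_insert {i : S} (h : i ≠ M.r) : M.anc i = insert i (M.anc (M.pa i)) := by
  ext a
  simp only [mem_anc, Finset.mem_insert]
  constructor
  · rintro ⟨n, rfl⟩
    cases n with
    | zero => exact Or.inl rfl
    | succ n => exact Or.inr ⟨n, by rw [← Function.iterate_succ_apply]⟩
  · rintro (rfl | ⟨n, rfl⟩)
    · exact ⟨0, rfl⟩
    · exact ⟨n + 1, by rw [Function.iterate_succ_apply]⟩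

lemma level_lt_of_mem_anc {a i : S} (h : a ∈ M.anc i) (hne : a ≠ i) :
    M.level a < M.level i := by
  by_cases hr : i = M.r
  · subst hr
    rw [M.anc_root, Finset.mem_singleton] at h
    exact absurd h hne
  · rw [M.anc_insert hr, Finset.mem_insert] at h
    rcases h with rfl | h
    · exact absurd rfl hne
    · have h1 := M.level_le_of_mem_anc h
      have h2 := M.level_pa i hr
      omega

lemma anc_antisymm {a i : S} (h1 : a ∈ M.anc i) (h2 : i ∈ M.anc a) : a = i := by
  by_contra hne
  have l1 := M.level_lt_of_mem_anc h1 hne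
  have l2 := M.level_lt_of_mem_anc h2 (Ne.symm hne)
  omega

lemma anc_trans {a b i : S} (h1 : a ∈ M.anc i) (h2 : b ∈ M.anc a) : b ∈ M.anc i := by
  obtain ⟨n, rfl⟩ := M.mem_anc.1 h1
  obtain ⟨m, rfl⟩ := M.mem_anc.1 h2
  exact M.mem_anc.2 ⟨m + n, Function.iterate_add_apply _ m n i⟩

lemma anc_chain {a b i : S} (h1 : a ∈ M.anc i) (h2 : b ∈ M.anc i) :
    a ∈ M.anc b ∨ b ∈ M.anc a := by
  obtain ⟨n, rfl⟩ := M.mem_anc.1 h1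
  obtain ⟨m, rfl⟩ := M.mem_anc.1 h2
  rcases le_total n m with h | h
  · right
    exact M.mem_anc.2 ⟨m - n, by rw [← Function.iterate_add_apply, Nat.sub_add_cancel h]⟩
  · left
    exact M.mem_anc.2 ⟨n - m, by rw [← Function.iterate_add_apply, Nat.sub_add_cancel h]⟩

lemma root_mem_anc (i : S) : M.r ∈ M.anc i := by
  -- strong induction on level
  have H : ∀ n, ∀ j : S, M.level j ≤ n → M.r ∈ M.anc j := by
    intro n
    induction n with
    | zero =>
      intro j hj
      have : j = M.r := M.root_unique j (Nat.le_zero.1 hj)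
      subst this; exact M.anc_self _
    | succ n ih =>
      intro j hj
      by_cases hr : j = M.r
      · subst hr; exact M.anc_self _
      · have := M.level_pa j hr
        have hpa : M.r ∈ M.anc (M.pa j) := ih _ (by omega)
        exact M.anc_trans (M.pa_mem_anc j) hpa
  exact H (M.level i) i le_rfl

lemma mem_subt {k a : S} : k ∈ M.subt a ↔ a ∈ M.anc k := by simp [subt]

lemma subt_self (a : S) : a ∈ M.subt a := M.mem_subt.2 (M.anc_self a)

lemma subt_subset {a b : S} (h : a ∈ M.subt b) : M.subt a ⊆ M.subt b := by
  intro k hk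
  exact M.mem_subt.2 (M.anc_trans (M.mem_subt.1 hk) (M.mem_subt.1 h))

lemma subt_root : M.subt M.r = Finset.univ := by
  ext k; simp [mem_subt, root_mem_anc]

lemma mem_child {k i : S} : k ∈ M.child i ↔ k ≠ M.r ∧ M.pa k = i := by simp [child]

lemma level_child {k i : S} (h : k ∈ M.child i) : M.level k = M.level i + 1 := by
  obtain ⟨h1, h2⟩ := M.mem_child.1 h
  have := M.level_pa k h1
  rw [h2] at this; omega

lemma child_mem_subt {k i : S} (h : k ∈ M.child i) : k ∈ M.subt i := by
  obtain ⟨h1, h2⟩ := M.mem_child.1 h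
  exact M.mem_subt.2 (h2 ▸ M.pa_mem_anc k)

lemma mem_subt_cases {a k : S} (h : k ∈ M.subt a) (hne : k ≠ a) :
    ∃ c ∈ M.child a, k ∈ M.subt c := by
  have H : ∀ n, ∀ k : S, M.level k ≤ n → k ∈ M.subt a → k ≠ a → ∃ c ∈ M.child a, k ∈ M.subt c := by
    intro n
    induction n with
    | zero =>
      intro k hk hmem hne
      have hkr : k = M.r := M.root_unique k (Nat.le_zero.1 hk)
      subst hkr
      have := M.mem_subt.1 hmem
      rw [M.anc_root, Finset.mem_singleton] at this
      exact absurd this.symm hne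
    | succ n ih =>
      intro k hk hmem hne
      by_cases hkr : k = M.r
      · subst hkr
        have := M.mem_subt.1 hmem
        rw [M.anc_root, Finset.mem_singleton] at this
        exact absurd this.symm hne
      · have hanc := M.mem_subt.1 hmem
        rw [M.anc_insert hkr, Finset.mem_insert] at hanc
        rcases hanc with rfl | hanc
        · exact absurd rfl hne
        · by_cases hpa : M.pa k = a
          · exact ⟨k, M.mem_child.2 ⟨hkr, hpa⟩, M.subt_self k⟩
          · have hlev := M.level_pa k hkr
            obtain ⟨cc, hcc, hsub⟩ := ih (M.pa k) (by omega) (M.mem_subt.2 hanc) hpa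
            exact ⟨cc, hcc, M.mem_subt.2 (M.anc_trans (M.pa_mem_anc k) (M.mem_subt.1 hsub))⟩
  exact H (M.level k) k le_rfl h hne

lemma subt_child_disjoint {i : S} {c c' : S} (hc : c ∈ M.child i) (hc' : c' ∈ M.child i)
    (hne : c ≠ c') : Disjoint (M.subt c) (M.subt c') := by
  rw [Finset.disjoint_left]
  intro k hk hk'
  have h1 := M.mem_subt.1 hk
  have h2 := M.mem_subt.1 hk'
  rcases M.anc_chain h1 h2 with h | h
  · have := M.level_lt_of_mem_anc h (by rintro rfl; exact hne rfl)
    rw [M.level_child hc, M.level_child hc'] at this; omega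
  · have := M.level_lt_of_mem_anc h (by rintro rfl; exact hne rfl)
    rw [M.level_child hc, M.level_child hc'] at this; omega

lemma not_mem_subt_child {a c : S} (hc : c ∈ M.child a) : a ∉ M.subt c := by
  intro h
  have := M.level_le_of_mem_anc (M.mem_subt.1 h)
  rw [M.level_child hc] at this; omega

lemma subt_eq (a : S) :
    M.subt a = insert a ((M.child a).biUnion M.subt) := by
  ext k
  simp only [Finset.mem_insert, Finset.mem_biUnion]
  constructor
  · intro h
    by_cases hne : k = a
    · exact Or.inl hne
    · obtain ⟨cc, hcc, hsub⟩ := M.mem_subt_cases h hne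
      exact Or.inr ⟨cc, hcc, hsub⟩
  · rintro (rfl | ⟨cc, hcc, hsub⟩)
    · exact M.subt_self k
    · exact M.subt_subset (M.child_mem_subt hcc) hsub

lemma a_not_mem_biUnion (a : S) : a ∉ (M.child a).biUnion M.subt := by
  simp only [Finset.mem_biUnion]
  rintro ⟨cc, hcc, hsub⟩
  exact M.not_mem_subt_child hcc hsub

lemma sum_subt (a : S) (f : S → ℝ) :
    ∑ i ∈ M.subt a, f i = f a + ∑ k ∈ M.child a, ∑ i ∈ M.subt k, f i := by
  rw [M.subt_eq a, Finset.sum_insert (M.a_not_mem_biUnion a), Finset.sum_biUnion]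
  intro x hx y hy hxy
  exact M.subt_child_disjoint hx hy hxy

lemma sum_anc_swap (F : S → S → ℝ) :
    ∑ i : S, ∑ a ∈ M.anc i, F a i = ∑ a : S, ∑ i ∈ M.subt a, F a i := by
  have h1 : ∀ i : S, ∑ a ∈ M.anc i, F a i = ∑ a : S, if a ∈ M.anc i then F a i else 0 := by
    intro i
    rw [Finset.sum_ite_mem]
    congr 1
    simp
  have h2 : ∀ a : S, ∑ i ∈ M.subt a, F a i = ∑ i : S, if a ∈ M.anc i then F a i else 0 := by
    intro a
    rw [← Finset.sum_filter]
    rfl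
  simp_rw [h1, h2]
  exact Finset.sum_comm

lemma pi_pos (i : S) : 0 < M.pi i :=
  Finset.prod_pos fun a _ => M.p_pos a

lemma pi_ne (i : S) : M.pi i ≠ 0 := (M.pi_pos i).ne'

lemma pi_root : M.pi M.r = 1 := by
  rw [pi, M.anc_root, Finset.prod_singleton, M.p_r]

lemma not_mem_anc_pa {k : S} (hk : k ≠ M.r) : k ∉ M.anc (M.pa k) := by
  intro h
  have h1 := M.level_le_of_mem_anc h
  have h2 := M.level_pa k hk
  omega

lemma pi_pa {k : S} (hk : k ≠ M.r) : M.pi k = M.p k * M.pi (M.pa k) := by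
  rw [pi, pi, M.anc_insert hk, Finset.prod_insert (M.not_mem_anc_pa hk)]

lemma pi_child {k a : S} (h : k ∈ M.child a) : M.pi k = M.p k * M.pi a := by
  obtain ⟨h1, h2⟩ := M.mem_child.1 h
  rw [M.pi_pa h1, h2]

lemma mem_subF {X : Finset S} {k : S} : k ∈ M.subF X ↔ ∃ i ∈ X, k ∈ M.subt i := by
  simp [subF]

end TreeMC
end Aux

section Aux2
namespace TreeMC

variable {S : Type*} [Fintype S] [DecidableEq S] (M : TreeMC S)

lemma down_ind (Q : S → Prop) (h : ∀ i, (∀ k ∈ M.child i, Q k) → Q i) : ∀ i, Q i := by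
  have H : ∀ n, ∀ i : S, M.L - M.level i ≤ n → Q i := by
    intro n
    induction n with
    | zero =>
      intro i hi
      have := M.level_lt i
      omega
    | succ n ih =>
      intro i hi
      apply h
      intro k hk
      have hlk := M.level_child hk
      have := M.level_lt k
      exact ih k (by omega)
  intro i; exact H (M.L - M.level i) i le_rfl

lemma up_ind (Q : S → Prop) (hr : Q M.r) (h : ∀ i, i ≠ M.r → Q (M.pa i) → Q i) : ∀ i, Q i := by
  have H : ∀ n, ∀ i : S, M.level i ≤ n → Q i := by
    intro n
    induction n with
    | zero =>
      intro i hi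
      have := M.root_unique i (Nat.le_zero.1 hi)
      subst this; exact hr
    | succ n ih =>
      intro i hi
      by_cases hir : i = M.r
      · subst hir; exact hr
      · have := M.level_pa i hir
        exact h i hir (ih (M.pa i) (by omega))
  intro i; exact H (M.level i) i le_rfl

section Vlemmas

variable {c : S → ℝ} {V : ℝ → S → ℝ}

lemma V_le (hV : M.IsSkiValue c V) (γ : ℝ) (i : S) : V γ i ≤ γ := by
  rw [hV γ i]; exact min_le_left _ _

lemma V_eq_min (hV : M.IsSkiValue c V) (γ : ℝ) (i : S) : V γ i = min γ (c i + M.Vf V γ i) := hV γ i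

lemma V_mono (hV : M.IsSkiValue c V) {γ γ' : ℝ} (h : γ ≤ γ') : ∀ i, V γ i ≤ V γ' i := by
  apply M.down_ind
  intro i ih
  rw [hV γ i, hV γ' i]
  apply min_le_min h
  apply add_le_add (le_refl _)
  apply Finset.sum_le_sum
  intro k hk
  exact mul_le_mul_of_nonneg_left (ih k hk) (M.p_pos k).le

lemma V_zero (hV : M.IsSkiValue c V) (hc : ∀ i, 0 < c i) : ∀ i, V 0 i = 0 := by
  apply M.down_ind
  intro i ih
  rw [hV 0 i]
  have hs : ∑ k ∈ M.child i, M.p k * V 0 k = 0 := by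
    apply Finset.sum_eq_zero
    intro k hk
    rw [ih k hk, mul_zero]
  rw [hs, add_zero]
  exact min_eq_left (hc i).le

lemma V_nonneg (hV : M.IsSkiValue c V) (hc : ∀ i, 0 < c i) {γ : ℝ} (hγ : 0 ≤ γ) (i : S) : 0 ≤ V γ i := by
  have := M.V_mono hV hγ i
  rwa [M.V_zero hV hc i] at this

lemma Vf_nonneg (hV : M.IsSkiValue c V) (hc : ∀ i, 0 < c i) {γ : ℝ} (hγ : 0 ≤ γ) (i : S) : 0 ≤ M.Vf V γ i := by
  apply Finset.sum_nonneg
  intro k _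
  exact mul_nonneg (M.p_pos k).le (M.V_nonneg hV hc hγ k)

lemma Vf_mono (hV : M.IsSkiValue c V) {γ γ' : ℝ} (h : γ ≤ γ') (i : S) : M.Vf V γ i ≤ M.Vf V γ' i := by
  apply Finset.sum_le_sum
  intro k _
  exact mul_le_mul_of_nonneg_left (M.V_mono hV h k) (M.p_pos k).le

end Vlemmas

/-- Localized top set: topmost elements of `P` within the subtree of `a`. -/
noncomputable def topIn (P : Finset S) (a : S) : Finset S :=
  (P ∩ M.subt a).filter fun x => ∀ t ∈ P ∩ M.subt a, x ∈ M.subt t → t = x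

/-- Mass of the localized top set. -/
noncomputable def hmP (P : Finset S) (a : S) : ℝ :=
  ∑ t ∈ M.topIn P a, M.pi t

lemma topIn_subset (P : Finset S) (a : S) : M.topIn P a ⊆ P ∩ M.subt a :=
  Finset.filter_subset _ _

lemma hmP_nonneg (P : Finset S) (a : S) : 0 ≤ M.hmP P a :=
  Finset.sum_nonneg fun t _ => (M.pi_pos t).le

lemma topIn_self {P : Finset S} {a : S} (h : a ∈ P) : M.topIn P a = {a} := by
  ext x
  simp only [topIn, Finset.mem_filter, Finset.mem_inter, Finset.mem_singleton]
  constructor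
  · rintro ⟨⟨hxP, hxs⟩, hcond⟩
    exact (hcond a ⟨h, M.subt_self a⟩ hxs).symm
  · rintro rfl
    refine ⟨⟨h, M.subt_self x⟩, fun t ht hxt => ?_⟩
    exact M.anc_antisymm (M.mem_subt.1 hxt) (M.mem_subt.1 ht.2)

lemma hmP_self {P : Finset S} {a : S} (h : a ∈ P) : M.hmP P a = M.pi a := by
  rw [hmP, M.topIn_self h, Finset.sum_singleton]

lemma topIn_biUnion {P : Finset S} {a : S} (h : a ∉ P) :
    M.topIn P a = (M.child a).biUnion (fun k => M.topIn P k) := by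
  ext x
  simp only [topIn, Finset.mem_filter, Finset.mem_inter, Finset.mem_biUnion]
  constructor
  · rintro ⟨⟨hxP, hxs⟩, hcond⟩
    have hxa : x ≠ a := by rintro rfl; exact h hxP
    obtain ⟨cc, hcc, hsub⟩ := M.mem_subt_cases hxs hxa
    refine ⟨cc, hcc, ⟨hxP, hsub⟩, fun t ht hxt => ?_⟩
    exact hcond t ⟨ht.1, M.subt_subset (M.child_mem_subt hcc) ht.2⟩ hxt
  · rintro ⟨cc, hcc, ⟨⟨hxP, hxs⟩, hcond⟩⟩
    refine ⟨⟨hxP, M.subt_subset (M.child_mem_subt hcc) hxs⟩, fun t ht hxt => ?_⟩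
    have hta : t ≠ a := by rintro rfl; exact h ht.1
    obtain ⟨cc', hcc', hsub'⟩ := M.mem_subt_cases ht.2 hta
    -- x ∈ subt t ⊆ subt cc', and x ∈ subt cc, so cc = cc'
    have hxcc' : x ∈ M.subt cc' := M.subt_subset hsub' hxt
    have hcceq : cc = cc' := by
      by_contra hne
      exact (Finset.disjoint_left.1 (M.subt_child_disjoint hcc hcc' hne)) hxs hxcc'
    subst hcceq
    exact hcond t ⟨ht.1, hsub'⟩ hxt

lemma hmP_rec {P : Finset S} {a : S} (h : a ∉ P) :
    M.hmP P a = ∑ k ∈ M.child a, M.hmP P k := by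
  have hd : Set.PairwiseDisjoint (↑(M.child a)) (fun k => M.topIn P k) := by
    intro x hx y hy hxy
    apply Finset.disjoint_left.2
    intro t ht ht'
    exact (Finset.disjoint_left.1 (M.subt_child_disjoint hx hy hxy))
      (Finset.mem_inter.1 (M.topIn_subset P x ht)).2
      (Finset.mem_inter.1 (M.topIn_subset P y ht')).2
  rw [hmP, M.topIn_biUnion h, Finset.sum_biUnion hd]
  rfl

/-- The slick mass bound: if states in `P` have index at or above `γ` and states outside
strictly han below, then the localized top mass is at most the subtree probability. -/
lemma slick {c : S → ℝ} {V : ℝ → S → ℝ} (hV : M.IsSkiValue c V) (hc : ∀ i, 0 < c i)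
    {P : Finset S} {γ : ℝ} (hγ : 0 ≤ γ)
    (h1 : ∀ x ∈ P, γ ≤ c x + M.Vf V γ x) (h2 : ∀ x ∉ P, c x + M.Vf V γ x ≤ γ) :
    ∀ a, (γ * M.hmP P a ≤ V γ a * M.pi a ∧ M.hmP P a ≤ M.pi a) ∧
      (a ∉ P → γ * M.hmP P a ≤ (γ - c a) * M.pi a) := by
  apply M.down_ind
  intro a ih
  by_cases haP : a ∈ P
  · refine ⟨⟨?_, ?_⟩, fun h => absurd haP h⟩
    · rw [M.hmP_self haP]
      have : V γ a = γ := by rw [hV γ a]; exact min_eq_left (h1 a haP)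
      rw [this]
    · rw [M.hmP_self haP]
  · have hrec : M.hmP P a = ∑ k ∈ M.child a, M.hmP P k := M.hmP_rec haP
    have hkey : γ * M.hmP P a ≤ M.Vf V γ a * M.pi a := by
      rw [hrec, Finset.mul_sum, Vf, Finset.sum_mul]
      apply Finset.sum_le_sum
      intro k hk
      have hik := (ih k hk).1.1
      calc γ * M.hmP P k ≤ V γ k * M.pi k := hik
        _ = M.p k * V γ k * M.pi a := by rw [M.pi_child hk]; ring
    have hVfle : M.Vf V γ a ≤ γ - c a := by
      have := h2 a haP; linarith
    have hle2 : γ * M.hmP P a ≤ (γ - c a) * M.pi a :=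
      le_trans hkey (mul_le_mul_of_nonneg_right hVfle (M.pi_pos a).le)
    have hγpos : 0 < γ := by
      by_contra hng
      push_neg at hng
      have hγ0 : γ = 0 := le_antisymm hng hγ
      rw [hγ0] at hle2
      have : 0 ≤ (0 - c a) * M.pi a := by
        have := M.hmP_nonneg P a
        nlinarith
      nlinarith [M.pi_pos a, hc a]
    have hmle : M.hmP P a ≤ M.pi a := by
      nlinarith [M.pi_pos a, hc a]
    refine ⟨⟨?_, hmle⟩, fun _ => hle2⟩
    have hVa : V γ a = min γ (c a + M.Vf V γ a) := hV γ a
    rw [hVa]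
    rcases le_total γ (c a + M.Vf V γ a) with h | h
    · rw [min_eq_left h]
      exact le_trans (mul_le_mul_of_nonneg_left hmle hγ) (by nlinarith [M.pi_pos a])
    · rw [min_eq_right h]
      have : M.Vf V γ a * M.pi a ≤ (c a + M.Vf V γ a) * M.pi a := by
        nlinarith [M.pi_pos a, hc a]
      exact le_trans hkey this

end TreeMC
end Aux2

section Aux3
namespace TreeMC

variable {S : Type*} [Fintype S] [DecidableEq S] (M : TreeMC S)

lemma sum_div_child {a k : S} (hk : k ∈ M.child a) (g : S → ℝ) :
    ∑ i ∈ M.subt k, g i / M.pi a = M.p k * ∑ i ∈ M.subt k, g i / M.pi k := by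
  rw [Finset.mul_sum]
  apply Finset.sum_congr rfl
  intro i _
  rw [M.pi_child hk]
  have h1 := M.pi_ne a
  have h2 := (M.p_pos k).ne'
  field_simp

lemma sum_weighted_rec (a : S) (β : S → ℝ) :
    ∑ i ∈ M.subt a, β i * M.pi i / M.pi a
      = β a + ∑ k ∈ M.child a, M.p k * ∑ i ∈ M.subt k, β i * M.pi i / M.pi k := by
  rw [M.sum_subt a (fun i => β i * M.pi i / M.pi a)]
  congr 1
  · rw [mul_div_assoc, div_self (M.pi_ne a), mul_one]
  · apply Finset.sum_congr rfl
    intro k hk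
    exact M.sum_div_child hk _

lemma cf_rec (c : S → ℝ) (a : S) :
    M.cf c a = c a + ∑ k ∈ M.child a, M.p k * M.cf c k :=
  M.sum_weighted_rec a c

lemma V_add_beta {c : S → ℝ} {V : ℝ → S → ℝ} (hV : M.IsSkiValue c V) (γ : ℝ) (a : S) :
    V γ a + M.betaStar c V γ a = c a + M.Vf V γ a := by
  have hVa : V γ a = min γ (c a + M.Vf V γ a) := hV γ a
  rw [hVa, betaStar]
  rcases le_total γ (c a + M.Vf V γ a) with h | h
  · rw [min_eq_left h, max_eq_right (by linarith)]
    ring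
  · rw [min_eq_right h, max_eq_left (by linarith)]
    ring

/-- The exact dual identity: `c^f(a) = V(γ,a) + Σ_{i∈sub(a)} β*(γ,i)·π(i)/π(a)`. -/
lemma cf_eq_V_add {c : S → ℝ} {V : ℝ → S → ℝ} (hV : M.IsSkiValue c V) (γ : ℝ) :
    ∀ a, M.cf c a = V γ a + ∑ i ∈ M.subt a, M.betaStar c V γ i * M.pi i / M.pi a := by
  apply M.down_ind
  intro a ih
  rw [M.sum_weighted_rec a (M.betaStar c V γ), M.cf_rec c a]
  have hsum : ∑ k ∈ M.child a, M.p k * M.cf c k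
      = M.Vf V γ a + ∑ k ∈ M.child a, M.p k * ∑ i ∈ M.subt k, M.betaStar c V γ i * M.pi i / M.pi k := by
    rw [Vf, ← Finset.sum_add_distrib]
    apply Finset.sum_congr rfl
    intro k hk
    rw [ih k hk]
    ring
  rw [hsum]
  have := M.V_add_beta hV γ a
  linarith

/-- Solution of the flow constraints. -/
lemma flow_eq {lam mu : ℝ} {q ν : S → ℝ} (hF : M.OrigFeasible lam mu q ν) :
    ∀ i, q i - ν i = M.pi i * (lam - ∑ a ∈ M.anc i, ν a / M.pi a) := by
  obtain ⟨hq0, hν0, hqr, hflow, hνq, hsum⟩ := hF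
  apply M.up_ind
  · rw [M.anc_root, Finset.sum_singleton, M.pi_root, hqr]
    simp
  · intro i hir ih
    have hq : q i = (q (M.pa i) - ν (M.pa i)) * M.p i := hflow i hir
    rw [M.anc_insert hir, Finset.sum_insert (M.not_mem_anc_pa hir)]
    rw [hq, ih, M.pi_pa hir]
    have hpine : M.pi i ≠ 0 := M.pi_ne i
    rw [M.pi_pa hir] at hpine
    have hpa0 : M.pi (M.pa i) ≠ 0 := M.pi_ne (M.pa i)
    have hp0 : M.p i ≠ 0 := (M.p_pos i).ne'
    field_simp
    ring

/-- Objective identity: any feasible point's objective in terms of `ν` only. -/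
lemma obj_eq {lam mu : ℝ} {q ν : S → ℝ} (c : S → ℝ) (hF : M.OrigFeasible lam mu q ν) :
    ∑ i : S, c i * (q i - ν i) = lam * M.cf c M.r - ∑ a : S, ν a * M.cf c a := by
  have hfl := M.flow_eq hF
  have h1 : ∑ i : S, c i * (q i - ν i)
      = lam * (∑ i : S, c i * M.pi i) - ∑ i : S, ∑ a ∈ M.anc i, ν a * (c i * M.pi i) / M.pi a := by
    rw [Finset.mul_sum, ← Finset.sum_sub_distrib]
    apply Finset.sum_congr rfl
    intro i _
    rw [hfl i]
    have : ∑ a ∈ M.anc i, ν a * (c i * M.pi i) / M.pi a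
        = c i * (M.pi i * ∑ a ∈ M.anc i, ν a / M.pi a) := by
      rw [Finset.mul_sum, Finset.mul_sum]
      apply Finset.sum_congr rfl
      intro a _
      ring
    rw [this]
    ring
  rw [h1, M.sum_anc_swap (fun a i => ν a * (c i * M.pi i) / M.pi a)]
  have hcfr : M.cf c M.r = ∑ i : S, c i * M.pi i := by
    rw [cf, M.subt_root, M.pi_root]
    simp
  rw [hcfr]
  congr 1
  apply Finset.sum_congr rfl
  intro a _
  rw [cf, Finset.mul_sum]
  apply Finset.sum_congr rfl
  intro i _
  ring

/-- Weak duality: every feasible point has objective at least `λ·V(γ,r) − μ·γ`. -/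
lemma weak_duality {c : S → ℝ} {V : ℝ → S → ℝ} (hV : M.IsSkiValue c V) (hc : ∀ i, 0 < c i)
    {lam mu : ℝ} {q ν : S → ℝ} (hF : M.OrigFeasible lam mu q ν)
    {γ : ℝ} (hγ : 0 ≤ γ) (hlam : 0 ≤ lam) :
    lam * V γ M.r - mu * γ ≤ ∑ i : S, c i * (q i - ν i) := by
  obtain ⟨hq0, hν0, hqr, hflow, hνq, hsum⟩ := hF
  have hF' : M.OrigFeasible lam mu q ν := ⟨hq0, hν0, hqr, hflow, hνq, hsum⟩
  have hfl := M.flow_eq hF'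
  -- the path-sums are at most lam
  have hT : ∀ i, ∑ a ∈ M.anc i, ν a / M.pi a ≤ lam := by
    intro i
    have h1 : 0 ≤ q i - ν i := by linarith [hνq i]
    rw [hfl i] at h1
    nlinarith [M.pi_pos i]
  -- bound Σ ν_a cf a
  have hbound : ∑ a : S, ν a * M.cf c a
      ≤ mu * γ + lam * ∑ i : S, M.betaStar c V γ i * M.pi i := by
    have hexp : ∀ a : S, ν a * M.cf c a
        = ν a * V γ a + ∑ i ∈ M.subt a, ν a * (M.betaStar c V γ i * M.pi i) / M.pi a := by
      intro a
      rw [M.cf_eq_V_add hV γ a, mul_add, Finset.mul_sum]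
      congr 1
      apply Finset.sum_congr rfl
      intro i _
      ring
    rw [Finset.sum_congr rfl (fun a _ => hexp a), Finset.sum_add_distrib]
    have hb1 : ∑ a : S, ν a * V γ a ≤ mu * γ := by
      have h1 : ∑ a : S, ν a * V γ a ≤ ∑ a : S, ν a * γ := by
        apply Finset.sum_le_sum
        intro a _
        exact mul_le_mul_of_nonneg_left (M.V_le hV γ a) (hν0 a)
      rw [← Finset.sum_mul] at h1
      calc ∑ a : S, ν a * V γ a ≤ (∑ a : S, ν a) * γ := h1
        _ ≤ mu * γ := mul_le_mul_of_nonneg_right hsum hγ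
    have hb2 : ∑ a : S, ∑ i ∈ M.subt a, ν a * (M.betaStar c V γ i * M.pi i) / M.pi a
        ≤ lam * ∑ i : S, M.betaStar c V γ i * M.pi i := by
      rw [← M.sum_anc_swap (fun a i => ν a * (M.betaStar c V γ i * M.pi i) / M.pi a)]
      rw [Finset.mul_sum]
      apply Finset.sum_le_sum
      intro i _
      have hβ : 0 ≤ M.betaStar c V γ i := le_max_left _ _
      have : ∑ a ∈ M.anc i, ν a * (M.betaStar c V γ i * M.pi i) / M.pi a
          = (M.betaStar c V γ i * M.pi i) * ∑ a ∈ M.anc i, ν a / M.pi a := by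
        rw [Finset.mul_sum]
        apply Finset.sum_congr rfl
        intro a _
        ring
      rw [this]
      have hTi := hT i
      have hnn : 0 ≤ M.betaStar c V γ i * M.pi i := mul_nonneg hβ (M.pi_pos i).le
      nlinarith
    linarith
  have hobj := M.obj_eq c hF'
  have hWr : ∑ i : S, M.betaStar c V γ i * M.pi i = M.cf c M.r - V γ M.r := by
    have := M.cf_eq_V_add hV γ M.r
    rw [M.subt_root, M.pi_root] at this
    simp only [div_one] at this
    linarith
  rw [hobj]
  rw [hWr] at hbound
  nlinarith

end TreeMC
end Aux3

section Aux4
namespace TreeMC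

variable {S : Type*} [Fintype S] [DecidableEq S] (M : TreeMC S)

lemma Vf_pi_diff {V : ℝ → S → ℝ} {γ γ' : ℝ} (a : S) (hm' : S → ℝ) {Δ : ℝ}
    (hk : ∀ k ∈ M.child a, (V γ k - V γ' k) * M.pi k ≤ Δ * hm' k) :
    (M.Vf V γ a - M.Vf V γ' a) * M.pi a ≤ Δ * ∑ k ∈ M.child a, hm' k := by
  rw [Vf, Vf, Finset.mul_sum]
  rw [sub_mul, Finset.sum_mul, Finset.sum_mul, ← Finset.sum_sub_distrib]
  apply Finset.sum_le_sum
  intro k hkk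
  have := hk k hkk
  calc M.p k * V γ k * M.pi a - M.p k * V γ' k * M.pi a
      = (V γ k - V γ' k) * M.pi k := by rw [M.pi_child hkk]; ring
    _ ≤ Δ * hm' k := this

/-- Right-difference lower bound. -/
lemma right_diff {c : S → ℝ} {V : ℝ → S → ℝ} (hV : M.IsSkiValue c V) (hc : ∀ i, 0 < c i)
    {P : Finset S} {γ Δ : ℝ} (hγ : 0 ≤ γ) (hΔ : 0 < Δ)
    (h1 : ∀ x ∈ P, γ + Δ ≤ c x + M.Vf V γ x)
    (h2 : ∀ x ∉ P, c x + M.Vf V γ x ≤ γ) :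
    ∀ a, Δ * M.hmP P a ≤ (V (γ + Δ) a - V γ a) * M.pi a := by
  have h1' : ∀ x ∈ P, γ ≤ c x + M.Vf V γ x := fun x hx => by linarith [h1 x hx]
  have hslick := M.slick hV hc hγ h1' h2
  apply M.down_ind
  intro a ih
  by_cases haP : a ∈ P
  · rw [M.hmP_self haP]
    have hVγ : V γ a = γ := by
      have hVa : V γ a = min γ (c a + M.Vf V γ a) := hV γ a
      rw [hVa]; exact min_eq_left (h1' a haP)
    have hVγΔ : V (γ + Δ) a = γ + Δ := by
      have hVa : V (γ + Δ) a = min (γ + Δ) (c a + M.Vf V (γ + Δ) a) := hV (γ + Δ) a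
      rw [hVa]
      apply min_eq_left
      have := M.Vf_mono hV (by linarith : γ ≤ γ + Δ) a
      linarith [h1 a haP]
    rw [hVγ, hVγΔ]
    simp
  · have hrec : M.hmP P a = ∑ k ∈ M.child a, M.hmP P k := M.hmP_rec haP
    have hVf' : Δ * ∑ k ∈ M.child a, M.hmP P k ≤ (M.Vf V (γ + Δ) a - M.Vf V γ a) * M.pi a := by
      rw [Vf, Vf, Finset.mul_sum, sub_mul, Finset.sum_mul, Finset.sum_mul, ← Finset.sum_sub_distrib]
      apply Finset.sum_le_sum
      intro k hkk
      have hik := ih k hkk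
      calc Δ * M.hmP P k ≤ (V (γ + Δ) k - V γ k) * M.pi k := hik
        _ = M.p k * V (γ + Δ) k * M.pi a - M.p k * V γ k * M.pi a := by
            rw [M.pi_child hkk]; ring
    have hmle := ((hslick a).1).2
    have hm0 := M.hmP_nonneg P a
    have hVγle : V γ a ≤ γ := M.V_le hV γ a
    have hVγle2 : V γ a ≤ c a + M.Vf V γ a := by
      have hVa : V γ a = min γ (c a + M.Vf V γ a) := hV γ a
      rw [hVa]; exact min_le_right _ _
    have hVa' : V (γ + Δ) a = min (γ + Δ) (c a + M.Vf V (γ + Δ) a) := hV (γ + Δ) a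
    have hpi := M.pi_pos a
    rcases le_total (γ + Δ) (c a + M.Vf V (γ + Δ) a) with hca | hca
    · rw [hVa', min_eq_left hca, hrec]
      nlinarith
    · rw [hVa', min_eq_right hca, hrec]
      nlinarith

/-- Left-difference upper bound. -/
lemma left_diff {c : S → ℝ} {V : ℝ → S → ℝ} (hV : M.IsSkiValue c V) (hc : ∀ i, 0 < c i)
    {P : Finset S} {γ Δ : ℝ} (hγ : 0 < γ) (hΔ0 : 0 < Δ) (hΔγ : Δ ≤ γ)
    (h1 : ∀ x ∈ P, γ ≤ c x + M.Vf V γ x)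
    (h2 : ∀ x ∉ P, c x + M.Vf V γ x ≤ γ)
    (hΔP : ∀ a ∈ P, Δ * M.Vf V γ a ≤ (c a + M.Vf V γ a - γ + Δ) * γ)
    (hΔB : ∀ a ∉ P, Δ + (c a + M.Vf V γ a) ≤ γ) :
    ∀ a, (V γ a - V (γ - Δ) a) * M.pi a ≤ Δ * M.hmP P a := by
  have hslick := M.slick hV hc hγ.le h1 h2
  apply M.down_ind
  intro a ih
  have hVf : (M.Vf V γ a - M.Vf V (γ - Δ) a) * M.pi a ≤ Δ * ∑ k ∈ M.child a, M.hmP P k :=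
    M.Vf_pi_diff a (M.hmP P) (fun k hkk => ih k hkk)
  have hpi := M.pi_pos a
  by_cases haP : a ∈ P
  · rw [M.hmP_self haP]
    have hVγ : V γ a = γ := by
      have hVa : V γ a = min γ (c a + M.Vf V γ a) := hV γ a
      rw [hVa]; exact min_eq_left (h1 a haP)
    -- children mass bound from slick
    have hcm : γ * ∑ k ∈ M.child a, M.hmP P k ≤ M.Vf V γ a * M.pi a := by
      rw [Finset.mul_sum, Vf, Finset.sum_mul]
      apply Finset.sum_le_sum
      intro k hkk
      have := ((hslick k).1).1
      calc γ * M.hmP P k ≤ V γ k * M.pi k := this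
        _ = M.p k * V γ k * M.pi a := by rw [M.pi_child hkk]; ring
    -- V (γ-Δ) a ≥ γ - Δ
    have hlow : γ - Δ ≤ V (γ - Δ) a := by
      have hVa : V (γ - Δ) a = min (γ - Δ) (c a + M.Vf V (γ - Δ) a) := hV (γ - Δ) a
      rw [hVa]
      have hkey : (γ - Δ - c a) * M.pi a ≤ M.Vf V (γ - Δ) a * M.pi a := by
        have hP := hΔP a haP
        -- (Vf γ a - Vf (γ-Δ) a) * pi a ≤ Δ * Σ hm ≤ (Δ/γ) * Vf γ a * pi a
        have hc1 : Δ * (γ * ∑ k ∈ M.child a, M.hmP P k) ≤ Δ * (M.Vf V γ a * M.pi a) :=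
          mul_le_mul_of_nonneg_left hcm hΔ0.le
        -- so γ * (Vf γ a - Vf(γ-Δ) a) * pi a ≤ Δ * Vf γ a * pi a
        have hc2 : γ * ((M.Vf V γ a - M.Vf V (γ - Δ) a) * M.pi a) ≤ Δ * (M.Vf V γ a * M.pi a) := by
          calc γ * ((M.Vf V γ a - M.Vf V (γ - Δ) a) * M.pi a)
              ≤ γ * (Δ * ∑ k ∈ M.child a, M.hmP P k) := by
                apply mul_le_mul_of_nonneg_left hVf hγ.le
            _ = Δ * (γ * ∑ k ∈ M.child a, M.hmP P k) := by ring
            _ ≤ Δ * (M.Vf V γ a * M.pi a) := hc1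
        nlinarith
      have := le_of_mul_le_mul_right (by linarith : (γ - Δ - c a) * M.pi a ≤ M.Vf V (γ - Δ) a * M.pi a) hpi
      have h3 : γ - Δ ≤ c a + M.Vf V (γ - Δ) a := by linarith
      exact le_min le_rfl h3
    rw [hVγ]
    nlinarith
  · have hrec : M.hmP P a = ∑ k ∈ M.child a, M.hmP P k := M.hmP_rec haP
    have hVγ : V γ a = c a + M.Vf V γ a := by
      have hVa : V γ a = min γ (c a + M.Vf V γ a) := hV γ a
      rw [hVa]; exact min_eq_right (h2 a haP)
    have hVa' : V (γ - Δ) a = min (γ - Δ) (c a + M.Vf V (γ - Δ) a) := hV (γ - Δ) a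
    have hm0 : 0 ≤ Δ * M.hmP P a := mul_nonneg hΔ0.le (M.hmP_nonneg P a)
    rcases le_total (γ - Δ) (c a + M.Vf V (γ - Δ) a) with hca | hca
    · rw [hVγ, hVa', min_eq_left hca]
      have := hΔB a haP
      nlinarith
    · rw [hVγ, hVa', min_eq_right hca, hrec]
      have : (c a + M.Vf V γ a - (c a + M.Vf V (γ - Δ) a)) * M.pi a
          = (M.Vf V γ a - M.Vf V (γ - Δ) a) * M.pi a := by ring
      rw [this]
      exact hVf

end TreeMC
end Aux4

section Aux5
namespace TreeMC

variable {S : Type*} [Fintype S] [DecidableEq S] (M : TreeMC S)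

lemma isTopSet_topIn_root (P : Finset S) : M.IsTopSet P (M.topIn P M.r) := by
  refine ⟨?_, ?_, ?_⟩
  · intro x hx
    exact (Finset.mem_inter.1 (M.topIn_subset P M.r hx)).1
  · intro x hx
    rw [mem_subF]
    have H : ∀ n, ∀ x : S, M.level x ≤ n → x ∈ P → ∃ t ∈ M.topIn P M.r, x ∈ M.subt t := by
      intro n
      induction n with
      | zero =>
        intro x hlev hxP
        refine ⟨x, ?_, M.subt_self x⟩
        rw [topIn, Finset.mem_filter, Finset.mem_inter]
        refine ⟨⟨hxP, by rw [M.subt_root]; exact Finset.mem_univ x⟩, fun t ht hxt => ?_⟩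
        by_contra hne
        have := M.level_lt_of_mem_anc (M.mem_subt.1 hxt) hne
        omega
      | succ n ih =>
        intro x hlev hxP
        by_cases hx : x ∈ M.topIn P M.r
        · exact ⟨x, hx, M.subt_self x⟩
        · rw [topIn, Finset.mem_filter, Finset.mem_inter] at hx
          push_neg at hx
          have hx' := hx ⟨hxP, by rw [M.subt_root]; exact Finset.mem_univ x⟩
          obtain ⟨t, ht, hxt, htne⟩ := hx'
          have htP : t ∈ P := (Finset.mem_inter.1 ht).1
          have hlt := M.level_lt_of_mem_anc (M.mem_subt.1 hxt) htne
          obtain ⟨t', ht', hsub'⟩ := ih t (by omega) htP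
          exact ⟨t', ht', M.subt_subset hsub' hxt⟩
    exact H (M.level x) x le_rfl hx
  · intro i hi k hk hne hmem
    rw [topIn, Finset.mem_filter] at hk
    exact hne (hk.2 i (M.topIn_subset P M.r hi) hmem)

lemma topIn_inter_subset (P : Finset S) (y : S) :
    M.topIn P M.r ∩ M.subt y ⊆ M.topIn P y := by
  intro t ht
  rw [Finset.mem_inter] at ht
  obtain ⟨ht1, ht2⟩ := ht
  rw [topIn, Finset.mem_filter, Finset.mem_inter] at ht1 ⊢
  refine ⟨⟨ht1.1.1, ht2⟩, fun t' ht' htt' => ?_⟩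
  apply ht1.2 t'
  · rw [Finset.mem_inter]
    exact ⟨(Finset.mem_inter.1 ht').1, by rw [M.subt_root]; exact Finset.mem_univ t'⟩
  · exact htt'

/-- Partition of the root top set of `P ⊆ Om` over a top set `Tm` of `Om`. -/
lemma hmP_root_partition {P Om Tm : Finset S} (hPOm : P ⊆ Om) (hTop : M.IsTopSet Om Tm) :
    M.hmP P M.r = ∑ y ∈ Tm, ∑ t ∈ M.topIn P M.r ∩ M.subt y, M.pi t := by
  have hcover : M.topIn P M.r = Tm.biUnion (fun y => M.topIn P M.r ∩ M.subt y) := by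
    ext t
    simp only [Finset.mem_biUnion, Finset.mem_inter]
    constructor
    · intro ht
      have htP : t ∈ P := (Finset.mem_inter.1 (M.topIn_subset P M.r ht)).1
      have := hTop.2.1 (hPOm htP)
      rw [mem_subF] at this
      obtain ⟨y, hy, hty⟩ := this
      exact ⟨y, hy, ht, hty⟩
    · rintro ⟨y, hy, ht, _⟩
      exact ht
  have hdisj : Set.PairwiseDisjoint (↑Tm) (fun y => M.topIn P M.r ∩ M.subt y) := by
    intro y hy y' hy' hne
    apply Finset.disjoint_left.2
    intro t ht ht'
    have h1 := (Finset.mem_inter.1 ht).2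
    have h2 := (Finset.mem_inter.1 ht').2
    rcases M.anc_chain (M.mem_subt.1 h1) (M.mem_subt.1 h2) with h | h
    · exact hTop.2.2 y hy y' hy' hne (M.mem_subt.2 h)
    · exact hTop.2.2 y' hy' y hy (Ne.symm hne) (M.mem_subt.2 h)
  rw [hmP]
  nth_rewrite 1 [hcover]
  rw [Finset.sum_biUnion hdisj]

/-- Order-prefix lemma: if all of `X` precedes all of `Xᶜ`, then the prefix of size
`X.card` is exactly `X`. -/
lemma prefix_image_eq {n : ℕ} (e : Fin n ≃ S) (X : Finset S)
    (hord : ∀ x ∈ X, ∀ y ∉ X, e.symm x < e.symm y) :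
    (Finset.univ.filter fun j : Fin n => (j : ℕ) < X.card).image e = X := by
  classical
  set J : Finset (Fin n) := Finset.univ.filter (fun j => e j ∈ X) with hJ
  have hXJ : X = J.image e := by
    ext x
    simp only [hJ, Finset.mem_image, Finset.mem_filter, Finset.mem_univ, true_and]
    constructor
    · intro hx; exact ⟨e.symm x, by simpa using hx, by simp⟩
    · rintro ⟨j, hj, rfl⟩; exact hj
  have hcard : J.card = X.card := by
    rw [hXJ, Finset.card_image_of_injective _ e.injective]
  have hdc : ∀ j j' : Fin n, j ≤ j' → j' ∈ J → j ∈ J := by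
    intro j j' hle hj'
    simp only [hJ, Finset.mem_filter, Finset.mem_univ, true_and] at hj' ⊢
    by_contra hne
    have := hord (e j') hj' (e j) hne
    simp only [Equiv.symm_apply_apply] at this
    exact absurd hle (not_le.2 this)
  have hiff : ∀ j : Fin n, j ∈ J ↔ (j : ℕ) < J.card := by
    intro j
    constructor
    · intro hj
      have hsub : Finset.Iic j ⊆ J := by
        intro j' hj'
        exact hdc j' j (Finset.mem_Iic.1 hj') hj
      have := Finset.card_le_card hsub
      rw [Fin.card_Iic] at this
      omega
    · intro hj
      by_contra hnj
      have hsub : J ⊆ Finset.Iio j := by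
        intro j'' hj''
        rw [Finset.mem_Iio]
        by_contra hge
        exact hnj (hdc j j'' (not_lt.1 hge) hj'')
      have := Finset.card_le_card hsub
      rw [Fin.card_Iio] at this
      omega
  have hfilt : (Finset.univ.filter fun j : Fin n => (j : ℕ) < X.card) = J := by
    ext j
    simp only [Finset.mem_filter, Finset.mem_univ, true_and]
    rw [hiff j, hcard]
  rw [hfilt, ← hXJ]

end TreeMC
end Aux5

section Aux6
namespace TreeMC

variable {S : Type*} [Fintype S] [DecidableEq S] (M : TreeMC S)

lemma mem_subF_self {X : Finset S} {i : S} (h : i ∈ X) : i ∈ M.subF X :=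
  M.mem_subF.2 ⟨i, h, M.subt_self i⟩

lemma subF_trans {X : Finset S} {i k : S} (hi : i ∈ M.subF X) (hk : k ∈ M.subt i) :
    k ∈ M.subF X := by
  obtain ⟨t, ht, hit⟩ := M.mem_subF.1 hi
  exact M.mem_subF.2 ⟨t, ht, M.subt_subset hit hk⟩

lemma subF_mono {X Y : Finset S} (h : X ⊆ Y) : M.subF X ⊆ M.subF Y := by
  intro k hk
  obtain ⟨t, ht, hkt⟩ := M.mem_subF.1 hk
  exact M.mem_subF.2 ⟨t, h ht, hkt⟩

lemma pa_ne {i : S} (h : i ≠ M.r) : M.pa i ≠ i := by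
  intro heq
  have := M.level_pa i h
  rw [heq] at this
  omega

lemma anc_of_pa {t i : S} (hir : i ≠ M.r) (ht : t ∈ M.anc i) (hne : t ≠ i) :
    t ∈ M.anc (M.pa i) := by
  rw [M.anc_insert hir, Finset.mem_insert] at ht
  rcases ht with rfl | ht
  · exact absurd rfl hne
  · exact ht

/-- A child of a state in `subF Om` is in `subF Om` but not (given a top set) in `Tm`. -/
lemma child_subF {Om Tm : Finset S} (hTm : M.IsTopSet Om Tm) {i : S} (hir : i ≠ M.r)
    (h : M.pa i ∈ M.subF Om) : i ∈ M.subF Om ∧ i ∉ Tm := by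
  constructor
  · exact M.subF_trans h (M.mem_subt.2 (M.pa_mem_anc i))
  · intro hiTm
    -- pa i ∈ subF Om means some t ∈ Om with t ∈ anc (pa i); then t ∈ anc i, t ≠ i.
    obtain ⟨t, ht, hit⟩ := M.mem_subF.1 h
    -- i ∈ Om ⊆ subF Tm : there is y ∈ Tm with y ∈ anc (pa i) would contradict...
    -- direct: i ∈ Tm ⊆ Om ⊆ subF Tm. Also t covers pa i. Get y ∈ Tm with t... simpler:
    -- t ∈ Om ⊆ subF Tm: ∃ y ∈ Tm, y ∈ anc t. Then y ∈ anc i, y ≠ i (level), contradicting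
    -- the antichain property between y and i in Tm.
    obtain ⟨y, hy, hty⟩ := M.mem_subF.1 (hTm.2.1 ht)
    have hyanc : y ∈ M.anc i := by
      have h1 : y ∈ M.anc (M.pa i) :=
        M.anc_trans (M.mem_subt.1 hit) (M.mem_subt.1 hty)
      exact M.anc_trans (M.pa_mem_anc i) h1
    have hyne : y ≠ i := by
      intro heq
      have h1 := M.level_le_of_mem_anc (M.anc_trans (M.mem_subt.1 hit) (M.mem_subt.1 hty))
      have h2 := M.level_pa i hir
      rw [heq] at h1
      omega
    exact hTm.2.2 y hy i hiTm hyne (M.mem_subt.2 hyanc)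

lemma subF_step {Om : Finset S} {i : S} (hir : i ≠ M.r) (h : i ∈ M.subF Om) :
    i ∈ Om ∨ M.pa i ∈ M.subF Om := by
  obtain ⟨t, ht, hit⟩ := M.mem_subF.1 h
  by_cases hti : t = i
  · subst hti; exact Or.inl ht
  · right
    exact M.mem_subF.2 ⟨t, ht, M.mem_subt.2 (M.anc_of_pa hir (M.mem_subt.1 hit) hti)⟩

/-- If `i ∈ subF Om` but its parent is not, then `i ∈ Tm`. -/
lemma mem_Tm_of_boundary {Om Tm : Finset S} (hTm : M.IsTopSet Om Tm) {i : S} (hir : i ≠ M.r)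
    (h : i ∈ M.subF Om) (hpa : M.pa i ∉ M.subF Om) : i ∈ Tm := by
  rcases M.subF_step hir h with hOm | hpaF
  · obtain ⟨y, hy, hiy⟩ := M.mem_subF.1 (hTm.2.1 hOm)
    by_cases hyi : y = i
    · subst hyi; exact hy
    · exfalso
      apply hpa
      have : y ∈ M.anc (M.pa i) := M.anc_of_pa hir (M.mem_subt.1 hiy) hyi
      exact M.mem_subF.2 ⟨y, hTm.1 hy, M.mem_subt.2 this⟩
  · exact absurd hpaF hpa

lemma root_mem_Tm {Om Tm : Finset S} (hTm : M.IsTopSet Om Tm) (h : M.r ∈ M.subF Om) :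
    M.r ∈ Tm := by
  obtain ⟨t, ht, hrt⟩ := M.mem_subF.1 h
  have htr : t = M.r := by
    have := M.mem_subt.1 hrt
    rw [M.anc_root, Finset.mem_singleton] at this
    exact this
  subst htr
  obtain ⟨y, hy, hty⟩ := M.mem_subF.1 (hTm.2.1 ht)
  have : y = M.r := by
    have := M.mem_subt.1 hty
    rw [M.anc_root, Finset.mem_singleton] at this
    exact this
  subst this
  exact hy

/-- Feasibility and total service of the equilibrium, no-partially-served case. -/
lemma feasN {lam mu : ℝ} (hlam0 : 0 < lam)
    {Om Tm : Finset S} (hTm : M.IsTopSet Om Tm)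
    (hserve : lam * ∑ i ∈ Tm, M.pi i ≤ mu)
    {q ν : S → ℝ}
    (hA : ∀ i, i ∉ M.subF Om → q i = lam * M.pi i ∧ ν i = 0)
    (hB : ∀ i ∈ Tm, q i = lam * M.pi i ∧ ν i = lam * M.pi i)
    (hC : ∀ i ∈ M.subF Om, i ∉ Tm → q i = 0 ∧ ν i = 0) :
    M.OrigFeasible lam mu q ν ∧ ∑ i : S, ν i = lam * ∑ i ∈ Tm, M.pi i := by
  have hTmF : ∀ i ∈ Tm, i ∈ M.subF Om := fun i hi => M.mem_subF_self (hTm.1 hi)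
  have hcases : ∀ i, (q i = lam * M.pi i ∧ ν i = 0) ∨ (q i = lam * M.pi i ∧ ν i = lam * M.pi i)
      ∨ (q i = 0 ∧ ν i = 0) := by
    intro i
    by_cases hF : i ∈ M.subF Om
    · by_cases hT : i ∈ Tm
      · exact Or.inr (Or.inl (hB i hT))
      · exact Or.inr (Or.inr (hC i hF hT))
    · exact Or.inl (hA i hF)
  have hq0 : ∀ i, 0 ≤ q i := by
    intro i
    rcases hcases i with ⟨h1, _⟩ | ⟨h1, _⟩ | ⟨h1, _⟩ <;> rw [h1] <;>
      exact mul_nonneg hlam0.le (M.pi_pos i).le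
  have hν0 : ∀ i, 0 ≤ ν i := by
    intro i
    rcases hcases i with ⟨_, h2⟩ | ⟨_, h2⟩ | ⟨_, h2⟩ <;> rw [h2] <;>
      exact mul_nonneg hlam0.le (M.pi_pos i).le
  have hνq : ∀ i, ν i ≤ q i := by
    intro i
    rcases hcases i with ⟨h1, h2⟩ | ⟨h1, h2⟩ | ⟨h1, h2⟩ <;> rw [h1, h2] <;>
      exact mul_nonneg hlam0.le (M.pi_pos i).le
  have hqr : q M.r = lam := by
    by_cases hF : M.r ∈ M.subF Om
    · have := (hB M.r (M.root_mem_Tm hTm hF)).1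
      rw [this, M.pi_root, mul_one]
    · rw [(hA M.r hF).1, M.pi_root, mul_one]
  have hflow : ∀ i, i ≠ M.r → q i = (q (M.pa i) - ν (M.pa i)) * M.p i := by
    intro i hir
    by_cases hpaF : M.pa i ∈ M.subF Om
    · -- parent inside: child is empty
      obtain ⟨hiF, hiT⟩ := M.child_subF hTm hir hpaF
      have hqi := (hC i hiF hiT).1
      have hdiff : q (M.pa i) - ν (M.pa i) = 0 := by
        by_cases hT : M.pa i ∈ Tm
        · obtain ⟨h1, h2⟩ := hB _ hT; rw [h1, h2]; ring
        · obtain ⟨h1, h2⟩ := hC _ hpaF hT; rw [h1, h2]; ring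
      rw [hqi, hdiff, zero_mul]
    · -- parent outside: q pa - ν pa = lam * pi pa
      obtain ⟨h1, h2⟩ := hA _ hpaF
      have hqi : q i = lam * M.pi i := by
        by_cases hF : i ∈ M.subF Om
        · exact (hB i (M.mem_Tm_of_boundary hTm hir hF hpaF)).1
        · exact (hA i hF).1
      rw [hqi, h1, h2, sub_zero, M.pi_pa hir]
      ring
  have hνsum : ∑ i : S, ν i = lam * ∑ i ∈ Tm, M.pi i := by
    rw [Finset.mul_sum]
    rw [← Finset.sum_subset (Finset.subset_univ Tm)]
    · apply Finset.sum_congr rfl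
      intro i hi
      exact (hB i hi).2
    · intro i _ hiT
      by_cases hF : i ∈ M.subF Om
      · exact (hC i hF hiT).2
      · exact (hA i hF).2
  exact ⟨⟨hq0, hν0, hqr, hflow, hνq, hνsum ▸ hserve⟩, hνsum⟩

end TreeMC
end Aux6

section Aux7
namespace TreeMC

variable {S : Type*} [Fintype S] [DecidableEq S] (M : TreeMC S)

/-- Feasibility and total service of the equilibrium, partially-served case. -/
lemma feasS {lam mu : ℝ} (hlam0 : 0 < lam)
    {Om Tm : Finset S} (hTm : M.IsTopSet Om Tm)
    {pp : S} (hppF : pp ∉ M.subF Om)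
    {nuP : ℝ} (hnuP0 : 0 ≤ nuP) (hnuPle : nuP ≤ lam * M.pi pp)
    (hsum_le : lam * ∑ i ∈ Tm, M.pi i
        + nuP * (1 - (∑ i ∈ Tm ∩ M.subt pp, M.pi i) / M.pi pp) ≤ mu)
    {q ν : S → ℝ}
    (hq1 : ∀ i, i ∉ M.subF Om → i ∉ M.subt pp → q i = lam * M.pi i ∧ ν i = 0)
    (hq2 : ∀ i ∈ Tm, i ∉ M.subt pp → q i = lam * M.pi i ∧ ν i = lam * M.pi i)
    (hq3 : ∀ i ∈ M.subF Om, i ∉ Tm → q i = 0 ∧ ν i = 0)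
    (hq4 : q pp = lam * M.pi pp ∧ ν pp = nuP)
    (hq5 : ∀ i ∈ Tm, i ∈ M.subt pp →
      q i = lam * M.pi i - nuP * M.pi i / M.pi pp ∧ ν i = q i)
    (hq6 : ∀ i ∈ M.subt pp, i ≠ pp → i ∉ M.subF Om →
      q i = lam * M.pi i - nuP * M.pi i / M.pi pp ∧ ν i = 0) :
    M.OrigFeasible lam mu q ν ∧
      ∑ i : S, ν i = lam * ∑ i ∈ Tm, M.pi i
        + nuP * (1 - (∑ i ∈ Tm ∩ M.subt pp, M.pi i) / M.pi pp) := by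
  have hpipp := M.pi_pos pp
  have hppTm : pp ∉ Tm := fun h => hppF (M.mem_subF_self (hTm.1 h))
  have hX0 : ∀ i, 0 ≤ lam * M.pi i - nuP * M.pi i / M.pi pp := by
    intro i
    have hpii := M.pi_pos i
    have hrw : lam * M.pi i - nuP * M.pi i / M.pi pp
        = (lam * M.pi pp - nuP) * M.pi i / M.pi pp := by
      field_simp
    rw [hrw]
    apply div_nonneg (mul_nonneg (by linarith) hpii.le) hpipp.le
  have hXle : ∀ i, lam * M.pi i - nuP * M.pi i / M.pi pp ≤ lam * M.pi i := by
    intro i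
    have hpii := M.pi_pos i
    have : 0 ≤ nuP * M.pi i / M.pi pp := by positivity
    linarith
  have hval : ∀ i, (q i = lam * M.pi i ∧ ν i = 0) ∨ (q i = lam * M.pi i ∧ ν i = lam * M.pi i)
      ∨ (q i = 0 ∧ ν i = 0) ∨ (i = pp ∧ q i = lam * M.pi i ∧ ν i = nuP)
      ∨ (q i = lam * M.pi i - nuP * M.pi i / M.pi pp ∧ ν i = q i)
      ∨ (q i = lam * M.pi i - nuP * M.pi i / M.pi pp ∧ ν i = 0) := by
    intro i
    by_cases hF : i ∈ M.subF Om
    · by_cases hT : i ∈ Tm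
      · by_cases hsp : i ∈ M.subt pp
        · exact Or.inr (Or.inr (Or.inr (Or.inr (Or.inl (hq5 i hT hsp)))))
        · exact Or.inr (Or.inl (hq2 i hT hsp))
      · exact Or.inr (Or.inr (Or.inl (hq3 i hF hT)))
    · by_cases hip : i = pp
      · subst hip; exact Or.inr (Or.inr (Or.inr (Or.inl ⟨rfl, hq4.1, hq4.2⟩)))
      · by_cases hsp : i ∈ M.subt pp
        · exact Or.inr (Or.inr (Or.inr (Or.inr (Or.inr (hq6 i hsp hip hF)))))
        · exact Or.inl (hq1 i hF hsp)
  have hq0 : ∀ i, 0 ≤ q i := by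
    intro i
    have hl : 0 ≤ lam * M.pi i := mul_nonneg hlam0.le (M.pi_pos i).le
    rcases hval i with ⟨h1,_⟩|⟨h1,_⟩|⟨h1,_⟩|⟨_,h1,_⟩|⟨h1,_⟩|⟨h1,_⟩ <;> rw [h1]
    all_goals first | exact hl | exact hX0 i | exact le_rfl
  have hν0 : ∀ i, 0 ≤ ν i := by
    intro i
    have hl : 0 ≤ lam * M.pi i := mul_nonneg hlam0.le (M.pi_pos i).le
    rcases hval i with ⟨_,h2⟩|⟨_,h2⟩|⟨_,h2⟩|⟨_,_,h2⟩|⟨h1,h2⟩|⟨_,h2⟩ <;> rw [h2]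
    all_goals first | exact hl | exact hnuP0 | (rw [h1]; exact hX0 i) | exact le_rfl
  have hνq : ∀ i, ν i ≤ q i := by
    intro i
    have hl : 0 ≤ lam * M.pi i := mul_nonneg hlam0.le (M.pi_pos i).le
    rcases hval i with ⟨h1,h2⟩|⟨h1,h2⟩|⟨h1,h2⟩|⟨hip,h1,h2⟩|⟨h1,h2⟩|⟨h1,h2⟩ <;> rw [h2] <;> rw [h1]
    all_goals first | exact hl | (rw [hip]; exact hnuPle) | exact hX0 i | exact le_rfl
  have hppr : M.r ∈ M.subt pp → pp = M.r := by
    intro h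
    have := M.mem_subt.1 h
    rw [M.anc_root, Finset.mem_singleton] at this
    exact this
  have hqr : q M.r = lam := by
    by_cases hF : M.r ∈ M.subF Om
    · have hrT := M.root_mem_Tm hTm hF
      by_cases hsp : M.r ∈ M.subt pp
      · exact absurd (hppr hsp ▸ hrT) hppTm
      · rw [(hq2 M.r hrT hsp).1, M.pi_root, mul_one]
    · by_cases hip : M.r = pp
      · rw [← hip] at hq4
        rw [hq4.1, M.pi_root, mul_one]
      · have hsp : M.r ∉ M.subt pp := fun h => hip (hppr h).symm
        rw [(hq1 M.r hF hsp).1, M.pi_root, mul_one]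
  have hflow : ∀ i, i ≠ M.r → q i = (q (M.pa i) - ν (M.pa i)) * M.p i := by
    intro i hir
    have hpii : M.pi i = M.p i * M.pi (M.pa i) := M.pi_pa hir
    by_cases hpaF : M.pa i ∈ M.subF Om
    · obtain ⟨hiF, hiT⟩ := M.child_subF hTm hir hpaF
      have hqi := (hq3 i hiF hiT).1
      have hdiff : q (M.pa i) - ν (M.pa i) = 0 := by
        by_cases hT : M.pa i ∈ Tm
        · by_cases hsp : M.pa i ∈ M.subt pp
          · have := (hq5 _ hT hsp).2; rw [this]; ring
          · obtain ⟨h1, h2⟩ := hq2 _ hT hsp; rw [h1, h2]; ring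
        · obtain ⟨h1, h2⟩ := hq3 _ hpaF hT; rw [h1, h2]; ring
      rw [hqi, hdiff, zero_mul]
    · by_cases hpap : M.pa i = pp
      · -- parent is the partially served state
        have hdiff : q (M.pa i) - ν (M.pa i) = lam * M.pi pp - nuP := by
          rw [hpap, hq4.1, hq4.2]
        have hanc : pp ∈ M.anc i := hpap ▸ M.pa_mem_anc i
        have hipp : i ≠ pp := by
          intro h
          have h1 := M.level_pa i hir
          rw [hpap, ← h] at h1
          omega
        have hqi : q i = lam * M.pi i - nuP * M.pi i / M.pi pp := by
          by_cases hF : i ∈ M.subF Om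
          · exact (hq5 i (M.mem_Tm_of_boundary hTm hir hF (hpap ▸ hppF))
              (M.mem_subt.2 hanc)).1
          · exact (hq6 i (M.mem_subt.2 hanc) hipp hF).1
        rw [hqi, hdiff, hpii, hpap]
        field_simp
      · by_cases hpas : pp ∈ M.anc (M.pa i)
        · -- parent strictly inside the subtree of pp, unreduced side
          obtain ⟨h1, h2⟩ := hq6 (M.pa i) (M.mem_subt.2 hpas) hpap hpaF
          have hanc : pp ∈ M.anc i := M.anc_trans (M.pa_mem_anc i) hpas
          have hipp : i ≠ pp := by
            intro h
            have hl1 := M.level_le_of_mem_anc hpas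
            have hl2 := M.level_pa i hir
            rw [← h] at hl1
            omega
          have hqi : q i = lam * M.pi i - nuP * M.pi i / M.pi pp := by
            by_cases hF : i ∈ M.subF Om
            · exact (hq5 i (M.mem_Tm_of_boundary hTm hir hF hpaF) (M.mem_subt.2 hanc)).1
            · exact (hq6 i (M.mem_subt.2 hanc) hipp hF).1
          rw [hqi, h1, h2, hpii]
          field_simp
          ring
        · -- parent completely outside
          have hpasp : M.pa i ∉ M.subt pp := fun h => hpas (M.mem_subt.1 h)
          obtain ⟨h1, h2⟩ := hq1 (M.pa i) hpaF hpasp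
          have hqi : q i = lam * M.pi i := by
            by_cases hsp : i ∈ M.subt pp
            · have : pp = i ∨ pp ∈ M.anc (M.pa i) := by
                have h3 := M.mem_subt.1 hsp
                rw [M.anc_insert hir, Finset.mem_insert] at h3
                exact h3
              rcases this with rfl | h3
              · exact hq4.1
              · exact absurd h3 hpas
            · by_cases hF : i ∈ M.subF Om
              · exact (hq2 i (M.mem_Tm_of_boundary hTm hir hF hpaF) hsp).1
              · exact (hq1 i hF hsp).1
          rw [hqi, h1, h2, hpii]
          ring
  have hνsum : ∑ i : S, ν i = lam * ∑ i ∈ Tm, M.pi i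
      + nuP * (1 - (∑ i ∈ Tm ∩ M.subt pp, M.pi i) / M.pi pp) := by
    have hzero : ∀ i ∈ Finset.univ, i ∉ insert pp Tm → ν i = 0 := by
      intro i _ hi
      rw [Finset.mem_insert] at hi
      push_neg at hi
      obtain ⟨hip, hiT⟩ := hi
      by_cases hF : i ∈ M.subF Om
      · exact (hq3 i hF hiT).2
      · by_cases hsp : i ∈ M.subt pp
        · exact (hq6 i hsp hip hF).2
        · exact (hq1 i hF hsp).2
    rw [← Finset.sum_subset (Finset.subset_univ (insert pp Tm)) hzero]
    rw [Finset.sum_insert hppTm]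
    have hTmsum : ∑ i ∈ Tm, ν i
        = ∑ i ∈ Tm, (lam * M.pi i - (if i ∈ M.subt pp then nuP * M.pi i / M.pi pp else 0)) := by
      apply Finset.sum_congr rfl
      intro i hi
      by_cases hsp : i ∈ M.subt pp
      · rw [if_pos hsp]
        have := (hq5 i hi hsp).2
        rw [this, (hq5 i hi hsp).1]
      · rw [if_neg hsp, sub_zero]
        exact (hq2 i hi hsp).2
    rw [hTmsum, hq4.2, Finset.sum_sub_distrib, ← Finset.mul_sum]
    have hite : ∑ i ∈ Tm, (if i ∈ M.subt pp then nuP * M.pi i / M.pi pp else 0)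
        = nuP * (∑ i ∈ Tm ∩ M.subt pp, M.pi i) / M.pi pp := by
      rw [Finset.sum_ite_mem, Finset.mul_sum, Finset.sum_div]
      all_goals
        apply Finset.sum_congr rfl
        intro i _
        ring
    rw [hite]
    field_simp
    ring
  exact ⟨⟨hq0, hν0, hqr, hflow, hνq, hνsum ▸ hsum_le⟩, hνsum⟩

end TreeMC
end Aux7

section Aux8
namespace TreeMC

variable {S : Type*} [Fintype S] [DecidableEq S] (M : TreeMC S)

/-- Claim B: every strictly-above-threshold state lies in `subF Om`. -/
lemma claimB_aux {c : S → ℝ} {V : ℝ → S → ℝ} (hV : M.IsSkiValue c V) (hc : ∀ i, 0 < c i)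
    {lam mu γ : ℝ} (hγ0 : 0 ≤ γ) (hlam0 : 0 < lam)
    (hγmin : ∀ γ' : ℝ, 0 ≤ γ' → mu * γ - lam * V γ M.r ≤ mu * γ' - lam * V γ' M.r)
    (e : Fin (Fintype.card S) ≃ S)
    (horder1 : ∀ a b : S, γ < c a + M.Vf V γ a → c b + M.Vf V γ b ≤ γ → e.symm a < e.symm b)
    {m : ℕ} {Om : Finset S}
    (hOm : Om = (Finset.univ.filter fun j : Fin (Fintype.card S) => (j : ℕ) < m).image ⇑e)
    (hmax : ∀ m' : ℕ, m < m' → m' ≤ Fintype.card S → ∀ T' : Finset S,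
      M.IsTopSet ((Finset.univ.filter fun j : Fin (Fintype.card S) => (j : ℕ) < m').image ⇑e) T' →
      mu < lam * ∑ i ∈ T', M.pi i) :
    ∀ b, γ < c b + M.Vf V γ b → b ∈ M.subF Om := by
  intro b hb
  by_contra hbF
  classical
  set A : Finset S := Finset.univ.filter (fun x => γ < c x + M.Vf V γ x) with hA
  have hmemA : ∀ x, x ∈ A ↔ γ < c x + M.Vf V γ x := by
    intro x; simp [hA]
  have hbA : b ∈ A := (hmemA b).2 hb
  have hord : ∀ x ∈ A, ∀ y ∉ A, e.symm x < e.symm y := by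
    intro x hx y hy
    rw [hmemA] at hx
    rw [hmemA] at hy
    push_neg at hy
    exact horder1 x y hx hy
  have hpre := TreeMC.prefix_image_eq e A hord
  have hbpos : m ≤ (e.symm b : ℕ) := by
    by_contra h
    push_neg at h
    apply hbF
    apply M.mem_subF_self
    rw [hOm]
    exact Finset.mem_image.2 ⟨e.symm b, Finset.mem_filter.2 ⟨Finset.mem_univ _, h⟩,
      e.apply_symm_apply b⟩
  have hbcard : (e.symm b : ℕ) < A.card := by
    have hb' : b ∈ (Finset.univ.filter fun j : Fin (Fintype.card S) => (j : ℕ) < A.card).image ⇑e := by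
      rw [hpre]; exact hbA
    obtain ⟨j, hj, hej⟩ := Finset.mem_image.1 hb'
    have : j = e.symm b := by rw [← hej]; simp
    rw [← this]
    exact (Finset.mem_filter.1 hj).2
  have hmA : m < A.card := lt_of_le_of_lt hbpos hbcard
  have hAcard : A.card ≤ Fintype.card S := Finset.card_le_univ A
  have hmaxA := hmax A.card hmA hAcard (M.topIn A M.r) (by rw [hpre]; exact M.isTopSet_topIn_root A)
  -- right-difference bound
  have hAne : A.Nonempty := ⟨b, hbA⟩
  set Δ : ℝ := A.inf' hAne (fun a => c a + M.Vf V γ a - γ) with hΔ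
  have hΔpos : 0 < Δ := by
    rw [hΔ, Finset.lt_inf'_iff]
    intro a ha
    rw [hmemA] at ha
    linarith
  have h1 : ∀ x ∈ A, γ + Δ ≤ c x + M.Vf V γ x := by
    intro x hx
    have := Finset.inf'_le (fun a => c a + M.Vf V γ a - γ) hx
    rw [← hΔ] at this
    linarith
  have h2 : ∀ x ∉ A, c x + M.Vf V γ x ≤ γ := by
    intro x hx
    rw [hmemA] at hx
    linarith
  have hrd := M.right_diff hV hc hγ0 hΔpos h1 h2 M.r
  rw [M.pi_root, mul_one] at hrd
  have hm1 := hγmin (γ + Δ) (by linarith)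
  have hmass : M.hmP A M.r = ∑ i ∈ M.topIn A M.r, M.pi i := rfl
  -- lam * hmP ≤ mu
  have hfinal : lam * M.hmP A M.r ≤ mu := by
    have e1 : lam * (V (γ + Δ) M.r - V γ M.r) ≤ mu * Δ := by linarith
    have e2 : lam * (Δ * M.hmP A M.r) ≤ lam * (V (γ + Δ) M.r - V γ M.r) :=
      mul_le_mul_of_nonneg_left hrd hlam0.le
    nlinarith
  rw [hmass] at hfinal
  linarith
lemma claimA_aux {c : S → ℝ} {V : ℝ → S → ℝ} (hV : M.IsSkiValue c V) (hc : ∀ i, 0 < c i)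
    {lam mu γ : ℝ} (hγ0 : 0 ≤ γ) (hlam0 : 0 < lam)
    (hγmin : ∀ γ' : ℝ, 0 ≤ γ' → mu * γ - lam * V γ M.r ≤ mu * γ' - lam * V γ' M.r)
    (e : Fin (Fintype.card S) ≃ S)
    (horder1 : ∀ a b : S, γ < c a + M.Vf V γ a → c b + M.Vf V γ b ≤ γ → e.symm a < e.symm b)
    (horder2 : ∀ a b : S, c a + M.Vf V γ a = γ → c b + M.Vf V γ b < γ → e.symm a < e.symm b)
    {m : ℕ} {Om Tm : Finset S}
    (hOm : Om = (Finset.univ.filter fun j : Fin (Fintype.card S) => (j : ℕ) < m).image ⇑e)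
    (hTm : M.IsTopSet Om Tm)
    {s : S} (hsB : c s + M.Vf V γ s < γ) (hsidx : (e.symm s : ℕ) ≤ m)
    (hcon : (lam * ∑ i ∈ Tm, M.pi i < mu) ∨ (lam * ∑ i ∈ Tm, M.pi i = mu ∧ s ∈ Tm)) :
    False := by
  classical
  have hγpos : 0 < γ := by
    rcases lt_or_eq_of_le hγ0 with h | h
    · exact h
    · exfalso
      have h1 : M.Vf V γ s = 0 := by
        rw [← h]
        apply Finset.sum_eq_zero
        intro k _
        rw [M.V_zero hV hc k, mul_zero]
      rw [h1] at hsB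
      have := hc s
      rw [← h] at hsB
      linarith
  set AE : Finset S := Finset.univ.filter (fun x => γ ≤ c x + M.Vf V γ x) with hAE
  have hmemAE : ∀ x, x ∈ AE ↔ γ ≤ c x + M.Vf V γ x := by intro x; simp [hAE]
  have hsAE : s ∉ AE := by rw [hmemAE]; push_neg; exact hsB
  have hAEOm : AE ⊆ Om := by
    intro x hx
    rw [hmemAE] at hx
    have hlt : e.symm x < e.symm s := by
      rcases lt_or_eq_of_le hx with h | h
      · exact horder1 x s h hsB.le
      · exact horder2 x s h.symm hsB
    have : (e.symm x : ℕ) < m := lt_of_lt_of_le hlt hsidx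
    rw [hOm]
    exact Finset.mem_image.2 ⟨e.symm x, Finset.mem_filter.2 ⟨Finset.mem_univ _, this⟩,
      e.apply_symm_apply x⟩
  have h1 : ∀ x ∈ AE, γ ≤ c x + M.Vf V γ x := fun x hx => (hmemAE x).1 hx
  have h2 : ∀ x ∉ AE, c x + M.Vf V γ x ≤ γ := by
    intro x hx
    rw [hmemAE] at hx
    push_neg at hx
    exact hx.le
  have hslick := M.slick hV hc hγ0 h1 h2
  -- choose Δ
  set cand : Finset ℝ := insert γ
      (((Finset.univ.filter (fun a => γ < c a + M.Vf V γ a)).image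
          (fun a => γ * (c a + M.Vf V γ a - γ) / (M.Vf V γ a + γ))) ∪
        ((Finset.univ.filter (fun a => c a + M.Vf V γ a < γ)).image
          (fun a => γ - (c a + M.Vf V γ a)))) with hcand
  have hcandne : cand.Nonempty := ⟨γ, Finset.mem_insert_self _ _⟩
  set Δ : ℝ := cand.min' hcandne with hΔ
  have hΔle : ∀ x ∈ cand, Δ ≤ x := fun x hx => Finset.min'_le _ _ hx
  have hΔpos : 0 < Δ := by
    have : ∀ x ∈ cand, 0 < x := by
      intro x hx
      rw [hcand] at hx
      rcases Finset.mem_insert.1 hx with rfl | hx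
      · exact hγpos
      · rcases Finset.mem_union.1 hx with hx | hx
        · obtain ⟨a, ha, rfl⟩ := Finset.mem_image.1 hx
          simp only [Finset.mem_filter] at ha
          have hVfnn := M.Vf_nonneg hV hc hγ0 a
          apply div_pos
          · apply mul_pos hγpos; linarith [ha.2]
          · linarith
        · obtain ⟨a, ha, rfl⟩ := Finset.mem_image.1 hx
          simp only [Finset.mem_filter] at ha
          linarith [ha.2]
    exact this Δ (Finset.min'_mem _ _)
  have hΔγ : Δ ≤ γ := hΔle γ (Finset.mem_insert_self _ _)
  have hΔP : ∀ a ∈ AE, Δ * M.Vf V γ a ≤ (c a + M.Vf V γ a - γ + Δ) * γ := by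
    intro a ha
    rw [hmemAE] at ha
    rcases lt_or_eq_of_le ha with hlt | heq
    · have hmem : γ * (c a + M.Vf V γ a - γ) / (M.Vf V γ a + γ) ∈ cand := by
        rw [hcand]
        apply Finset.mem_insert_of_mem
        apply Finset.mem_union_left
        exact Finset.mem_image.2 ⟨a, Finset.mem_filter.2 ⟨Finset.mem_univ _, hlt⟩, rfl⟩
      have hle := hΔle _ hmem
      have hVfnn := M.Vf_nonneg hV hc hγ0 a
      have hden : 0 < M.Vf V γ a + γ := by linarith
      have h3 : Δ * (M.Vf V γ a + γ) ≤ γ * (c a + M.Vf V γ a - γ) := (le_div_iff₀ hden).1 hle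
      nlinarith [mul_pos hΔpos hγpos]
    · have hVfle : M.Vf V γ a = γ - c a := by linarith
      rw [hVfle]
      have := hc a
      nlinarith
  have hΔB : ∀ a ∉ AE, Δ + (c a + M.Vf V γ a) ≤ γ := by
    intro a ha
    rw [hmemAE] at ha
    push_neg at ha
    have hmem : γ - (c a + M.Vf V γ a) ∈ cand := by
      rw [hcand]
      apply Finset.mem_insert_of_mem
      apply Finset.mem_union_right
      exact Finset.mem_image.2 ⟨a, Finset.mem_filter.2 ⟨Finset.mem_univ _, ha⟩, rfl⟩
    have := hΔle _ hmem
    linarith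
  have hld := M.left_diff hV hc hγpos hΔpos hΔγ h1 h2 hΔP hΔB M.r
  rw [M.pi_root, mul_one] at hld
  have hm1 := hγmin (γ - Δ) (by linarith)
  have hmulam : mu ≤ lam * M.hmP AE M.r := by
    have e1 : mu * Δ ≤ lam * (V γ M.r - V (γ - Δ) M.r) := by linarith
    have e2 : lam * (V γ M.r - V (γ - Δ) M.r) ≤ lam * (Δ * M.hmP AE M.r) :=
      mul_le_mul_of_nonneg_left hld hlam0.le
    nlinarith
  -- partition bound over Tm
  have hpart := M.hmP_root_partition hAEOm hTm
  have hpery : ∀ y ∈ Tm, ∑ t ∈ M.topIn AE M.r ∩ M.subt y, M.pi t ≤ M.pi y := by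
    intro y _
    calc ∑ t ∈ M.topIn AE M.r ∩ M.subt y, M.pi t
        ≤ ∑ t ∈ M.topIn AE y, M.pi t :=
          Finset.sum_le_sum_of_subset_of_nonneg (M.topIn_inter_subset AE y)
            (fun t _ _ => (M.pi_pos t).le)
      _ = M.hmP AE y := rfl
      _ ≤ M.pi y := ((hslick y).1).2
  rcases hcon with hstrict | ⟨heq, hsTm⟩
  · have : M.hmP AE M.r ≤ ∑ y ∈ Tm, M.pi y := by
      rw [hpart]
      exact Finset.sum_le_sum hpery
    have : lam * M.hmP AE M.r ≤ lam * ∑ y ∈ Tm, M.pi y :=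
      mul_le_mul_of_nonneg_left this hlam0.le
    linarith
  · -- strict at y = s
    have hstrict_s : ∑ t ∈ M.topIn AE M.r ∩ M.subt s, M.pi t < M.pi s := by
      have hb1 : ∑ t ∈ M.topIn AE M.r ∩ M.subt s, M.pi t ≤ M.hmP AE s :=
        Finset.sum_le_sum_of_subset_of_nonneg (M.topIn_inter_subset AE s)
          (fun t _ _ => (M.pi_pos t).le)
      have hb2 : γ * M.hmP AE s ≤ (γ - c s) * M.pi s := (hslick s).2 hsAE
      have hcs := hc s
      have hps := M.pi_pos s
      nlinarith
    have hlt : M.hmP AE M.r < ∑ y ∈ Tm, M.pi y := by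
      rw [hpart]
      exact Finset.sum_lt_sum hpery ⟨s, hsTm, hstrict_s⟩
    have : lam * M.hmP AE M.r < lam * ∑ y ∈ Tm, M.pi y :=
      mul_lt_mul_of_pos_left hlt hlam0
    linarith

end TreeMC
end Aux8

section Aux9
namespace TreeMC

variable {S : Type*} [Fintype S] [DecidableEq S] (M : TreeMC S)

lemma cost_eq {c : S → ℝ} {V : ℝ → S → ℝ} (hV : M.IsSkiValue c V)
    {lam mu γ : ℝ} {q ν : S → ℝ} (hF : M.OrigFeasible lam mu q ν)
    (hsup : ∀ a, ν a ≠ 0 → γ ≤ c a + M.Vf V γ a)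
    (htight : ∀ i, γ < c i + M.Vf V γ i → ν i = q i)
    (hμ : ∑ i : S, ν i = mu) :
    ∑ i : S, c i * (q i - ν i) = lam * V γ M.r - mu * γ := by
  have hfl := M.flow_eq hF
  have hobj := M.obj_eq c hF
  have hexp : ∀ a : S, ν a * M.cf c a
      = ν a * V γ a + ∑ i ∈ M.subt a, ν a * (M.betaStar c V γ i * M.pi i) / M.pi a := by
    intro a
    rw [M.cf_eq_V_add hV γ a, mul_add, Finset.mul_sum]
    congr 1
    apply Finset.sum_congr rfl
    intro i _
    ring
  have hsum1 : ∑ a : S, ν a * V γ a = mu * γ := by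
    rw [← hμ, Finset.sum_mul]
    apply Finset.sum_congr rfl
    intro a _
    by_cases h : ν a = 0
    · rw [h]; ring
    · have hVa : V γ a = γ := by
        have := hV γ a
        rw [this]
        exact min_eq_left (hsup a h)
      rw [hVa]
  have hsum2 : ∑ a : S, ∑ i ∈ M.subt a, ν a * (M.betaStar c V γ i * M.pi i) / M.pi a
      = lam * ∑ i : S, M.betaStar c V γ i * M.pi i := by
    rw [← M.sum_anc_swap (fun a i => ν a * (M.betaStar c V γ i * M.pi i) / M.pi a),
      Finset.mul_sum]
    apply Finset.sum_congr rfl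
    intro i _
    by_cases hβ : M.betaStar c V γ i = 0
    · rw [hβ]
      simp
    · have hD : γ < c i + M.Vf V γ i := by
        by_contra hle
        push_neg at hle
        apply hβ
        rw [betaStar, max_eq_left (by linarith)]
      have hti : ν i = q i := htight i hD
      have hTi : ∑ a ∈ M.anc i, ν a / M.pi a = lam := by
        have h0 : q i - ν i = 0 := by rw [hti]; ring
        rw [hfl i] at h0
        have hpi := M.pi_ne i
        rcases mul_eq_zero.1 h0 with h | h
        · exact absurd h hpi
        · linarith
      have : ∑ a ∈ M.anc i, ν a * (M.betaStar c V γ i * M.pi i) / M.pi a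
          = (M.betaStar c V γ i * M.pi i) * ∑ a ∈ M.anc i, ν a / M.pi a := by
        rw [Finset.mul_sum]
        apply Finset.sum_congr rfl
        intro a _
        ring
      rw [this, hTi]
      ring
  have hWr : ∑ i : S, M.betaStar c V γ i * M.pi i = M.cf c M.r - V γ M.r := by
    have := M.cf_eq_V_add hV γ M.r
    rw [M.subt_root, M.pi_root] at this
    simp only [div_one] at this
    linarith
  have : ∑ a : S, ν a * M.cf c a = mu * γ + lam * (M.cf c M.r - V γ M.r) := by
    rw [Finset.sum_congr rfl (fun a _ => hexp a), Finset.sum_add_distrib, hsum1, hsum2, hWr]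
  rw [hobj, this]
  ring

end TreeMC
end Aux9


/-- Let `γ*` minimize `γ ↦ μ·γ − λ·V(γ, r)` over `γ ≥ 0`, and let the
priority ordering `e : Fin |S| ≃ S` list every state with `c(i) + V^f(γ*, i) > γ*`
before every state with `c(i) + V^f(γ*, i) ≤ γ*`, and every state with
`c(i) + V^f(γ*, i) = γ*` before every state with `c(i) + V^f(γ*, i) < γ*`.
Then the fluid equilibrium `(q, ν) = (q^o, ν^o)` of this ordering attains the optimal
fluid cost: `Σ_{i∈S} c(i)·(q_i − ν_i) = C*`. In particular, the equilibrium of the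
OaRC priority ordering is an optimal solution of OriginalFluid. -/
theorem fluid_equilibrium_optimal {S : Type*} [Fintype S] [DecidableEq S]
    (M : TreeMC S) (c : S → ℝ) (hc : ∀ i, 0 < c i)
    (V : ℝ → S → ℝ) (hV : M.IsSkiValue c V)
    (lam mu : ℝ) (hlam0 : 0 < lam) (hlam1 : lam < 1) (hmu0 : 0 < mu) (hmu1 : mu ≤ 1)
    (γstar : ℝ) (hγ0 : 0 ≤ γstar)
    (hγmin : ∀ γ : ℝ, 0 ≤ γ →
      mu * γstar - lam * V γstar M.r ≤ mu * γ - lam * V γ M.r)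
    (e : Fin (Fintype.card S) ≃ S)
    -- the ordering ranks states with index above `γ*` first, then those equal to `γ*`,
    -- then those below `γ*`
    (horder1 : ∀ a b : S, γstar < c a + M.Vf V γstar a →
      c b + M.Vf V γstar b ≤ γstar → e.symm a < e.symm b)
    (horder2 : ∀ a b : S, c a + M.Vf V γstar a = γstar →
      c b + M.Vf V γstar b < γstar → e.symm a < e.symm b)
    (m : ℕ) (hm : m ≤ Fintype.card S)
    (Om : Finset S)
    (hOm : Om = (Finset.univ.filter fun j : Fin (Fintype.card S) => (j : ℕ) < m).image ⇑e)
    (Tm : Finset S) (hTm : M.IsTopSet Om Tm)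
    (hserve : lam * ∑ i ∈ Tm, M.pi i ≤ mu)
    (hmax : ∀ m' : ℕ, m < m' → m' ≤ Fintype.card S → ∀ T' : Finset S,
      M.IsTopSet
        ((Finset.univ.filter fun j : Fin (Fintype.card S) => (j : ℕ) < m').image ⇑e) T' →
      mu < lam * ∑ i ∈ T', M.pi i)
    (pOpt : Option S)
    (hpsome : ∀ h : m < Fintype.card S,
      lam * ∑ i ∈ Tm, M.pi i < mu → pOpt = some (e ⟨m, h⟩))
    (hpnone : (m = Fintype.card S ∨ lam * ∑ i ∈ Tm, M.pi i = mu) → pOpt = none)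
    (nuP : ℝ)
    (hnuPnone : pOpt = none → nuP = 0)
    (hnuPsome : ∀ pp : S, pOpt = some pp →
      nuP = (mu - lam * ∑ i ∈ Tm, M.pi i) /
        (1 - (∑ i ∈ Tm ∩ M.subt pp, M.pi i) / M.pi pp))
    (q ν : S → ℝ)
    -- (T-1) un-reduced states
    (hq1 : ∀ i : S, i ∉ M.subF Om → (∀ pp : S, pOpt = some pp → i ∉ M.subt pp) →
      q i = lam * M.pi i ∧ ν i = 0)
    -- (T-2) fully-blocked states
    (hq2 : ∀ i ∈ Tm, (∀ pp : S, pOpt = some pp → i ∉ M.subt pp) →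
      q i = lam * M.pi i ∧ ν i = lam * M.pi i)
    -- (T-3) empty states
    (hq3 : ∀ i ∈ M.subF Om, i ∉ Tm → q i = 0 ∧ ν i = 0)
    -- (T-4) the partially-served state
    (hq4 : ∀ pp : S, pOpt = some pp → q pp = lam * M.pi pp ∧ ν pp = nuP)
    -- (T-5) partially-blocked states
    (hq5 : ∀ pp : S, pOpt = some pp → ∀ i ∈ Tm ∩ M.subt pp,
      q i = lam * M.pi i - nuP * M.pi i / M.pi pp ∧ ν i = q i)
    -- (T-6) partially-reduced states
    (hq6 : ∀ pp : S, pOpt = some pp → ∀ i ∈ M.subt pp, i ≠ pp → i ∉ M.subF Om →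
      q i = lam * M.pi i - nuP * M.pi i / M.pi pp ∧ ν i = 0)
    (Cstar : ℝ)
    (hC : IsLeast
      {v : ℝ | ∃ q' ν' : S → ℝ, M.OrigFeasible lam mu q' ν' ∧
        v = ∑ i : S, c i * (q' i - ν' i)} Cstar) :
    ∑ i : S, c i * (q i - ν i) = Cstar := by
  classical
  obtain ⟨hCmem, hClb⟩ := hC
  obtain ⟨q', ν', hF', hCval⟩ := hCmem
  have hlow : lam * V γstar M.r - mu * γstar ≤ Cstar := by
    rw [hCval]
    exact M.weak_duality hV hc hF' hγ0 hlam0.le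
  rcases eq_or_lt_of_le hm with hmeq | hmlt
  · -- all states are fully served or blocked: zero cost
    have hpO : pOpt = none := hpnone (Or.inl hmeq)
    have hnone : ∀ (i : S) (pp : S), pOpt = some pp → i ∉ M.subt pp := by
      intro i pp h
      rw [hpO] at h
      exact absurd h (by simp)
    have hOmU : Om = Finset.univ := by
      rw [hOm, hmeq]
      ext x
      constructor
      · intro _
        exact Finset.mem_univ x
      · intro _
        exact Finset.mem_image.2 ⟨e.symm x, Finset.mem_filter.2
          ⟨Finset.mem_univ _, (e.symm x).isLt⟩, e.apply_symm_apply x⟩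
    obtain ⟨hFeas, hνsum⟩ := M.feasN hlam0 hTm hserve
      (fun i hi => hq1 i hi (hnone i)) (fun i hi => hq2 i hi (hnone i)) hq3
    have hqν : ∀ i, q i = ν i := by
      intro i
      have hiF : i ∈ M.subF Om := by
        rw [hOmU]
        exact M.mem_subF_self (Finset.mem_univ i)
      by_cases hT : i ∈ Tm
      · obtain ⟨h1, h2⟩ := hq2 i hT (hnone i)
        rw [h1, h2]
      · obtain ⟨h1, h2⟩ := hq3 i hiF hT
        rw [h1, h2]
    have hcost0 : ∑ i : S, c i * (q i - ν i) = 0 :=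
      Finset.sum_eq_zero fun i _ => by rw [hqν i]; ring
    have hub : Cstar ≤ 0 := hcost0 ▸ hClb ⟨q, ν, hFeas, rfl⟩
    have hlb : 0 ≤ Cstar := by
      rw [hCval]
      apply Finset.sum_nonneg
      intro i _
      exact mul_nonneg (hc i).le (by linarith [hF'.2.2.2.2.1 i])
    rw [hcost0]
    linarith
  · -- m < Fintype.card S
    rcases lt_or_eq_of_le hserve with hstrict | hsEq
    · -- strictly slack service: there is a partially-served state pp
      have hsome : pOpt = some (e ⟨m, hmlt⟩) := hpsome hmlt hstrict
      set pp : S := e ⟨m, hmlt⟩ with hpp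
      have hnuP := hnuPsome pp hsome
      obtain ⟨hq4a, hq4b⟩ := hq4 pp hsome
      have hpipp := M.pi_pos pp
      have hppOm : pp ∉ Om := by
        rw [hOm]
        intro hmem
        obtain ⟨j, hj, hej⟩ := Finset.mem_image.1 hmem
        have hje : j = ⟨m, hmlt⟩ := e.injective (by rw [hej])
        rw [hje] at hj
        have := (Finset.mem_filter.1 hj).2
        simp at this
      have hppTm : pp ∉ Tm := fun h => hppOm (hTm.1 h)
      have hppF : pp ∉ M.subF Om := by
        intro hF
        have h0 := (hq3 pp hF hppTm).1
        rw [h0] at hq4a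
        nlinarith [M.pi_pos pp]
      have hsub_iff : ∀ i : S, i ∉ M.subt pp → (∀ pp' : S, pOpt = some pp' → i ∉ M.subt pp') := by
        intro i h pp' hpp'
        rw [hsome] at hpp'
        have hppeq : pp = pp' := Option.some.inj hpp'
        rw [← hppeq]
        exact h
      have hq1' : ∀ i, i ∉ M.subF Om → i ∉ M.subt pp → q i = lam * M.pi i ∧ ν i = 0 :=
        fun i h1 h2 => hq1 i h1 (hsub_iff i h2)
      have hq2' : ∀ i ∈ Tm, i ∉ M.subt pp → q i = lam * M.pi i ∧ ν i = lam * M.pi i :=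
        fun i h1 h2 => hq2 i h1 (hsub_iff i h2)
      have hq5' : ∀ i ∈ Tm, i ∈ M.subt pp →
          q i = lam * M.pi i - nuP * M.pi i / M.pi pp ∧ ν i = q i :=
        fun i h1 h2 => hq5 pp hsome i (Finset.mem_inter.2 ⟨h1, h2⟩)
      have hq6' : ∀ i ∈ M.subt pp, i ≠ pp → i ∉ M.subF Om →
          q i = lam * M.pi i - nuP * M.pi i / M.pi pp ∧ ν i = 0 :=
        fun i h1 h2 h3 => hq6 pp hsome i h1 h2 h3
      -- top set of the (m+1)-prefix
      have hppsubF : ∀ t ∈ Tm, pp ∉ M.subt t := by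
        intro t ht h
        exact hppF (M.mem_subF.2 ⟨t, hTm.1 ht, h⟩)
      have hppnotin : pp ∉ Tm.filter (fun t => t ∉ M.subt pp) :=
        fun h => hppTm (Finset.mem_filter.1 h).1
      have hOm1 : (Finset.univ.filter fun j : Fin (Fintype.card S) => (j : ℕ) < m + 1).image ⇑e
          = insert pp Om := by
        ext x
        simp only [Finset.mem_image, Finset.mem_filter, Finset.mem_univ, true_and,
          Finset.mem_insert]
        constructor
        · rintro ⟨j, hj, rfl⟩
          rcases Nat.lt_succ_iff_lt_or_eq.1 hj with h | h
          · right
            rw [hOm]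
            exact Finset.mem_image.2 ⟨j, Finset.mem_filter.2 ⟨Finset.mem_univ _, h⟩, rfl⟩
          · left
            rw [hpp]
            congr 1
            exact Fin.ext h
        · rintro (rfl | hx)
          · exact ⟨⟨m, hmlt⟩, Nat.lt_succ_self m, rfl⟩
          · rw [hOm] at hx
            obtain ⟨j, hj, rfl⟩ := Finset.mem_image.1 hx
            exact ⟨j, Nat.lt_succ_of_lt (Finset.mem_filter.1 hj).2, rfl⟩
      have hT'top : M.IsTopSet (insert pp Om) (insert pp (Tm.filter (fun t => t ∉ M.subt pp))) := by
        refine ⟨?_, ?_, ?_⟩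
        · intro x hx
          rcases Finset.mem_insert.1 hx with rfl | hx
          · exact Finset.mem_insert_self _ _
          · exact Finset.mem_insert_of_mem (hTm.1 (Finset.mem_filter.1 hx).1)
        · intro x hx
          rcases Finset.mem_insert.1 hx with rfl | hx
          · exact M.mem_subF.2 ⟨pp, Finset.mem_insert_self _ _, M.subt_self pp⟩
          · obtain ⟨t, ht, hxt⟩ := M.mem_subF.1 (hTm.2.1 hx)
            by_cases hts : t ∈ M.subt pp
            · exact M.mem_subF.2 ⟨pp, Finset.mem_insert_self _ _, M.subt_subset hts hxt⟩
            · exact M.mem_subF.2 ⟨t, Finset.mem_insert_of_mem (Finset.mem_filter.2 ⟨ht, hts⟩), hxt⟩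
        · intro i hi k hk hne
          rcases Finset.mem_insert.1 hi with rfl | hi
          · rcases Finset.mem_insert.1 hk with rfl | hk
            · exact absurd rfl hne
            · exact (Finset.mem_filter.1 hk).2
          · rcases Finset.mem_insert.1 hk with rfl | hk
            · exact hppsubF i (Finset.mem_filter.1 hi).1
            · exact hTm.2.2 i (Finset.mem_filter.1 hi).1 k (Finset.mem_filter.1 hk).1 hne
      have hmaxT := hmax (m + 1) (Nat.lt_succ_self m) hmlt
        (insert pp (Tm.filter (fun t => t ∉ M.subt pp))) (by rw [hOm1]; exact hT'top)
      -- mass computation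
      have hTmsplit : ∑ i ∈ Tm, M.pi i
          = ∑ i ∈ Tm.filter (fun t => t ∉ M.subt pp), M.pi i + ∑ i ∈ Tm ∩ M.subt pp, M.pi i := by
        have h1 : Tm ∩ M.subt pp = Tm.filter (fun t => t ∈ M.subt pp) := by
          ext t
          simp [Finset.mem_inter, Finset.mem_filter]
        rw [h1, ← Finset.sum_filter_add_sum_filter_not Tm (fun t => t ∈ M.subt pp)]
        ring
      have hT'mass : ∑ i ∈ insert pp (Tm.filter (fun t => t ∉ M.subt pp)), M.pi i
          = M.pi pp + (∑ i ∈ Tm, M.pi i - ∑ i ∈ Tm ∩ M.subt pp, M.pi i) := by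
        rw [Finset.sum_insert hppnotin, hTmsplit]
        ring
      have h5 : (1 - (∑ i ∈ Tm ∩ M.subt pp, M.pi i) / M.pi pp) * M.pi pp
          = M.pi pp - ∑ i ∈ Tm ∩ M.subt pp, M.pi i := by
        field_simp
      have hmass_lt : mu < lam * ∑ i ∈ Tm, M.pi i
          + lam * ((1 - (∑ i ∈ Tm ∩ M.subt pp, M.pi i) / M.pi pp) * M.pi pp) := by
        rw [h5]
        rw [hT'mass] at hmaxT
        nlinarith
      have hκpos : 0 < 1 - (∑ i ∈ Tm ∩ M.subt pp, M.pi i) / M.pi pp := by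
        by_contra h
        push_neg at h
        nlinarith [mul_pos hlam0 hpipp]
      have hnuPκ : nuP * (1 - (∑ i ∈ Tm ∩ M.subt pp, M.pi i) / M.pi pp)
          = mu - lam * ∑ i ∈ Tm, M.pi i := by
        rw [hnuP, div_mul_cancel₀ _ (ne_of_gt hκpos)]
      have hnuP0 : 0 ≤ nuP := by
        rw [hnuP]
        exact div_nonneg (by linarith) hκpos.le
      have hnuPle : nuP ≤ lam * M.pi pp := by
        have h7 : nuP * (1 - (∑ i ∈ Tm ∩ M.subt pp, M.pi i) / M.pi pp)
            < lam * ((1 - (∑ i ∈ Tm ∩ M.subt pp, M.pi i) / M.pi pp) * M.pi pp) := by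
          linarith
        by_contra hcon
        push_neg at hcon
        have h8 := mul_lt_mul_of_pos_right hcon hκpos
        nlinarith
      have hsum_le : lam * ∑ i ∈ Tm, M.pi i
          + nuP * (1 - (∑ i ∈ Tm ∩ M.subt pp, M.pi i) / M.pi pp) ≤ mu := by linarith
      obtain ⟨hFeas, hνsum⟩ := M.feasS hlam0 hTm hppF hnuP0 hnuPle
        hsum_le hq1' hq2' hq3 ⟨hq4a, hq4b⟩ hq5' hq6'
      have hμeq : ∑ i : S, ν i = mu := by
        rw [hνsum]
        linarith
      -- complementary slackness
      have hclaimB := M.claimB_aux hV hc hγ0 hlam0 hγmin e horder1 hOm hmax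
      have htight : ∀ i, γstar < c i + M.Vf V γstar i → ν i = q i := by
        intro i hi
        have hiF := hclaimB i hi
        by_cases hT : i ∈ Tm
        · by_cases hsp : i ∈ M.subt pp
          · exact (hq5' i hT hsp).2
          · obtain ⟨h1, h2⟩ := hq2' i hT hsp
            rw [h1, h2]
        · obtain ⟨h1, h2⟩ := hq3 i hiF hT
          rw [h1, h2]
      have hsupp : ∀ a, ν a ≠ 0 → γstar ≤ c a + M.Vf V γstar a := by
        intro a hνa
        by_contra hlt
        push_neg at hlt
        have hidx : (e.symm a : ℕ) ≤ m := by
          by_cases hT : a ∈ Tm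
          · have haOm : a ∈ Om := hTm.1 hT
            rw [hOm] at haOm
            obtain ⟨j, hj, hej⟩ := Finset.mem_image.1 haOm
            have hje : j = e.symm a := by rw [← hej]; simp
            have h2 := (Finset.mem_filter.1 hj).2
            rw [hje] at h2
            omega
          · by_cases hap : a = pp
            · rw [hap, hpp]
              simp
            · exfalso
              apply hνa
              by_cases hF : a ∈ M.subF Om
              · exact (hq3 a hF hT).2
              · by_cases hsp : a ∈ M.subt pp
                · exact (hq6' a hsp hap hF).2
                · exact (hq1' a hF hsp).2
        exact absurd (M.claimA_aux hV hc hγ0 hlam0 hγmin e horder1 horder2 hOm hTm hlt hidx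
          (Or.inl hstrict)) (fun h => h)
      have hcost := M.cost_eq hV hFeas hsupp htight hμeq
      have hub : Cstar ≤ ∑ i : S, c i * (q i - ν i) := hClb ⟨q, ν, hFeas, rfl⟩
      rw [hcost] at hub ⊢
      linarith
    · -- exactly saturated service: no partially-served state
      have hpO : pOpt = none := hpnone (Or.inr hsEq)
      have hnone : ∀ (i : S) (pp : S), pOpt = some pp → i ∉ M.subt pp := by
        intro i pp h
        rw [hpO] at h
        exact absurd h (by simp)
      obtain ⟨hFeas, hνsum⟩ := M.feasN hlam0 hTm hserve
        (fun i hi => hq1 i hi (hnone i)) (fun i hi => hq2 i hi (hnone i)) hq3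
      have hclaimB := M.claimB_aux hV hc hγ0 hlam0 hγmin e horder1 hOm hmax
      have htight : ∀ i, γstar < c i + M.Vf V γstar i → ν i = q i := by
        intro i hi
        have hiF := hclaimB i hi
        by_cases hT : i ∈ Tm
        · obtain ⟨h1, h2⟩ := hq2 i hT (hnone i)
          rw [h1, h2]
        · obtain ⟨h1, h2⟩ := hq3 i hiF hT
          rw [h1, h2]
      have hsupp : ∀ a, ν a ≠ 0 → γstar ≤ c a + M.Vf V γstar a := by
        intro a hνa
        by_contra hlt
        push_neg at hlt
        have hT : a ∈ Tm := by
          by_contra hT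
          apply hνa
          by_cases hF : a ∈ M.subF Om
          · exact (hq3 a hF hT).2
          · exact (hq1 a hF (hnone a)).2
        have hidx : (e.symm a : ℕ) ≤ m := by
          have haOm : a ∈ Om := hTm.1 hT
          rw [hOm] at haOm
          obtain ⟨j, hj, hej⟩ := Finset.mem_image.1 haOm
          have hje : j = e.symm a := by rw [← hej]; simp
          have h2 := (Finset.mem_filter.1 hj).2
          rw [hje] at h2
          omega
        exact M.claimA_aux hV hc hγ0 hlam0 hγmin e horder1 horder2 hOm hTm hlt hidx
          (Or.inr ⟨hsEq, hT⟩)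
      have hμeq : ∑ i : S, ν i = mu := hνsum.trans hsEq
      have hcost := M.cost_eq hV hFeas hsupp htight hμeq
      have hub : Cstar ≤ ∑ i : S, c i * (q i - ν i) := hClb ⟨q, ν, hFeas, rfl⟩
      rw [hcost] at hub ⊢
      linarith
end

section
/- Suppose Φ : 𝒳 → ℝ_{≥0} is measurable with ∫ Φ dμ < ∞, G ⊆ 𝒳 is a measurable set with μ(𝒳 \ G) ≤ ε, and ε, B, Δ, v_whp, v_max are constants with ε ≥ 0, B ≥ 0, 0 ≤ Δ ≤ v_whp, 0 < v_whp ≤ v_max, such that: (i) for every x ∈ G, P(x, {y : Φ(y) − Φ(x) ≥ v_whp}) ≤ ε; (ii) for every x ∈ G with Φ(x) ≥ B, P(x, {y : Φ(y) − Φ(x) ≥ −Δ}) ≤ ε; (iii) for every x ∈ 𝒳, P(x, {y : Φ(y) − Φ(x) > v_max}) = 0. Then for every real a ≥ B − v_whp, μ{x : Φ(x) > a + v_whp} ≤ (v_whp/(v_whp + Δ))·μ{x : Φ(x) > a − v_whp} + 6·ε·v_max/v_whp. -/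
open MeasureTheory ProbabilityTheory Filter Topology

/-- Auxiliary bound: if `f ≤ c` off a bad set of measure `≤ ε` (and off a null set),
and `f ≤ c + d` off the null set, then `∫⁻ ofReal (f y) ≤ ofReal c + ofReal ε * ofReal d`. -/
lemma helper_bound {𝒳 : Type*} [MeasurableSpace 𝒳] (ν : Measure 𝒳) [IsProbabilityMeasure ν]
    (f : 𝒳 → ℝ) (Bad N : Set 𝒳) (hBad : MeasurableSet Bad) (hN : ν N = 0)
    {ε c d : ℝ} (hc : 0 ≤ c) (hd : 0 ≤ d)
    (hBe : ν Bad ≤ ENNReal.ofReal ε)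
    (hfc : ∀ y, y ∉ Bad → y ∉ N → f y ≤ c) (hfd : ∀ y, y ∉ N → f y ≤ c + d) :
    ∫⁻ y, ENNReal.ofReal (f y) ∂ν ≤ ENNReal.ofReal c + ENNReal.ofReal ε * ENNReal.ofReal d := by
  have hae : ∀ᵐ y ∂ν, y ∉ N := by
    rw [ae_iff]
    simpa [Set.setOf_mem_eq] using hN
  have hmono : ∀ᵐ y ∂ν, ENNReal.ofReal (f y) ≤
      ENNReal.ofReal c + Bad.indicator (fun _ => ENNReal.ofReal d) y := by
    filter_upwards [hae] with y hy
    by_cases hyB : y ∈ Bad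
    · rw [Set.indicator_of_mem hyB]
      calc ENNReal.ofReal (f y) ≤ ENNReal.ofReal (c + d) :=
            ENNReal.ofReal_le_ofReal (hfd y hy)
        _ = _ := ENNReal.ofReal_add hc hd
    · rw [Set.indicator_of_notMem hyB, add_zero]
      exact ENNReal.ofReal_le_ofReal (hfc y hyB hy)
  calc ∫⁻ y, ENNReal.ofReal (f y) ∂ν
      ≤ ∫⁻ y, (ENNReal.ofReal c + Bad.indicator (fun _ => ENNReal.ofReal d) y) ∂ν :=
        lintegral_mono_ae hmono
    _ = ENNReal.ofReal c + ENNReal.ofReal d * ν Bad := by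
        rw [lintegral_add_left measurable_const, lintegral_const, measure_univ, mul_one,
          lintegral_indicator_const hBad]
    _ ≤ ENNReal.ofReal c + ENNReal.ofReal d * ENNReal.ofReal ε := by gcongr
    _ = _ := by rw [mul_comm]

/-- the one-step geometric tail bound for a Lyapunov function `Φ` with
respect to a Markov transition kernel `P` and a stationary probability measure `μ`:
if `Φ` has, from any state in a high-probability set `G`, increments below `v_whp`
with probability `≥ 1 − ε`, negative drift `−Δ` with probability `≥ 1 − ε` whenever
`Φ ≥ B`, and almost-sure increments at most `v_max`, then for every `a ≥ B − v_whp`,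
`μ{Φ > a + v_whp} ≤ (v_whp/(v_whp+Δ))·μ{Φ > a − v_whp} + 6·ε·v_max/v_whp`. -/
theorem lyapunov_geometric_tail_step
    {𝒳 : Type*} [MeasurableSpace 𝒳]
    (P : Kernel 𝒳 𝒳) [IsMarkovKernel P]
    (μ : Measure 𝒳) [IsProbabilityMeasure μ]
    (hinv : Kernel.Invariant P μ)
    (Φ : 𝒳 → ℝ) (hΦmeas : Measurable Φ) (hΦnonneg : ∀ x, 0 ≤ Φ x)
    (hΦint : Integrable Φ μ)
    (G : Set 𝒳) (hG : MeasurableSet G)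
    (ε B Δ vwhp vmax : ℝ)
    (hε : 0 ≤ ε) (hB : 0 ≤ B) (hΔ0 : 0 ≤ Δ) (hΔv : Δ ≤ vwhp)
    (hv0 : 0 < vwhp) (hvmax : vwhp ≤ vmax)
    (hGc : μ Gᶜ ≤ ENNReal.ofReal ε)
    (h1 : ∀ x ∈ G, P x {y | vwhp ≤ Φ y - Φ x} ≤ ENNReal.ofReal ε)
    (h2 : ∀ x ∈ G, B ≤ Φ x → P x {y | -Δ ≤ Φ y - Φ x} ≤ ENNReal.ofReal ε)
    (h3 : ∀ x, P x {y | vmax < Φ y - Φ x} = 0)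
    (a : ℝ) (ha : B - vwhp ≤ a) :
    μ {x | a + vwhp < Φ x} ≤
      ENNReal.ofReal (vwhp / (vwhp + Δ)) * μ {x | a - vwhp < Φ x} +
        ENNReal.ofReal (6 * ε * vmax / vwhp) := by
  classical
  have hvmax0 : 0 < vmax := lt_of_lt_of_le hv0 hvmax
  set A : Set 𝒳 := {x | a + vwhp < Φ x} with hA_def
  set C : Set 𝒳 := {x | a - vwhp < Φ x} with hC_def
  set slab : Set 𝒳 := C \ A with hslab_def
  have hAmeas : MeasurableSet A := measurableSet_lt measurable_const hΦmeas
  have hCmeas : MeasurableSet C := measurableSet_lt measurable_const hΦmeas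
  have hslabmeas : MeasurableSet slab := hCmeas.diff hAmeas
  -- Key drift-balance inequality for each cutoff level M
  have key : ∀ M : ℝ, a ≤ M →
      ENNReal.ofReal Δ * μ A ≤ ENNReal.ofReal vwhp * μ slab + ENNReal.ofReal (4 * (ε * vmax))
        + ENNReal.ofReal vmax * μ {x | M < Φ x} := by
    intro M hM
    set g : 𝒳 → ℝ := fun x => max (min (Φ x) M - a) 0 with hg_def
    have hgmeas : Measurable g :=
      ((hΦmeas.min measurable_const).sub measurable_const).max measurable_const
    have hg0 : ∀ x, 0 ≤ g x := fun x => le_max_right _ _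
    have hgM : ∀ x, g x ≤ max (M - a) 0 := fun x =>
      max_le_max (sub_le_sub_right (min_le_right _ _) a) le_rfl
    have glip : ∀ x y (t : ℝ), 0 ≤ t → Φ y ≤ Φ x + t → g y ≤ g x + t := by
      intro x y t ht hyx
      have h1' : min (Φ y) M ≤ min (Φ x) M + t := by
        calc min (Φ y) M ≤ min (Φ x + t) (M + t) := min_le_min hyx (by linarith)
          _ = min (Φ x) M + t := by rw [min_add_add_right]
      apply max_le
      · have : min (Φ x) M - a ≤ g x := le_max_left _ _
        linarith
      · linarith [hg0 x]
    set S : Set 𝒳 := G ∩ {x | a + vwhp < Φ x ∧ Φ x ≤ M} with hS_def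
    have hSmeas : MeasurableSet S :=
      hG.inter ((measurableSet_lt measurable_const hΦmeas).inter
        (measurableSet_le hΦmeas measurable_const))
    -- the pointwise drift inequality
    have claim : ∀ x,
        (fun x => ∫⁻ y, ENNReal.ofReal (g y) ∂(P x)) x
          + S.indicator (fun _ => ENNReal.ofReal Δ) x ≤
        (fun x => ENNReal.ofReal (g x) + slab.indicator (fun _ => ENNReal.ofReal vwhp) x
          + ENNReal.ofReal (2 * (ε * vmax)) + Gᶜ.indicator (fun _ => ENNReal.ofReal vmax) x) x := by
      intro x
      simp only
      by_cases hxG : x ∈ G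
      · have hxGc : x ∉ Gᶜ := by simpa using hxG
        rw [Set.indicator_of_notMem hxGc, add_zero]
        by_cases hxA : a + vwhp < Φ x
        · have hxslab : x ∉ slab := fun h => h.2 hxA
          rw [Set.indicator_of_notMem hxslab, add_zero]
          by_cases hxM : Φ x ≤ M
          · -- drift case: x ∈ S
            have hxS : x ∈ S := ⟨hxG, hxA, hxM⟩
            rw [Set.indicator_of_mem hxS]
            have hgx : g x = Φ x - a := by
              rw [hg_def]
              simp only
              rw [min_eq_left hxM, max_eq_left (by linarith)]
            have hbound := helper_bound (P x) g {y | -Δ ≤ Φ y - Φ x} {y | vmax < Φ y - Φ x}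
              (measurableSet_le measurable_const (hΦmeas.sub measurable_const)) (h3 x)
              (c := Φ x - a - Δ) (d := Δ + vmax) (by linarith) (by linarith)
              (h2 x hxG (by linarith)) ?_ ?_
            · calc (∫⁻ y, ENNReal.ofReal (g y) ∂(P x)) + ENNReal.ofReal Δ
                  ≤ (ENNReal.ofReal (Φ x - a - Δ)
                      + ENNReal.ofReal ε * ENNReal.ofReal (Δ + vmax)) + ENNReal.ofReal Δ :=
                    add_le_add_left hbound _
                _ = ENNReal.ofReal (g x) + ENNReal.ofReal ε * ENNReal.ofReal (Δ + vmax) := by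
                    rw [add_right_comm, ← ENNReal.ofReal_add (by linarith) hΔ0, hgx]
                    ring_nf
                _ ≤ ENNReal.ofReal (g x) + ENNReal.ofReal (2 * (ε * vmax)) := by
                    gcongr
                    rw [← ENNReal.ofReal_mul hε]
                    exact ENNReal.ofReal_le_ofReal (by nlinarith)
            · intro y hyB _
              have hy : Φ y < Φ x - Δ := by
                simp only [Set.mem_setOf_eq, not_le] at hyB; linarith
              have h0 : g y ≤ max (Φ y - a) 0 :=
                max_le_max (by linarith [min_le_left (Φ y) M]) le_rfl
              refine h0.trans (max_le (by linarith) (by linarith))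
            · intro y hyN
              have hy : Φ y ≤ Φ x + vmax := by
                simp only [Set.mem_setOf_eq, not_lt] at hyN; linarith
              have := glip x y vmax (le_of_lt hvmax0) hy
              rw [hgx] at this
              linarith
          · -- above the cutoff: x ∉ S
            have hxS : x ∉ S := fun h => hxM h.2.2
            rw [Set.indicator_of_notMem hxS, add_zero]
            have hgx : g x = M - a := by
              rw [hg_def]
              simp only
              rw [min_eq_right (by linarith), max_eq_left (by linarith)]
            have hbound := helper_bound (P x) g ∅ {y | vmax < Φ y - Φ x}
              MeasurableSet.empty (h3 x) (ε := ε) (c := g x) (d := 0) (hg0 x) le_rfl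
              (by simp) ?_ ?_
            · calc ∫⁻ y, ENNReal.ofReal (g y) ∂(P x)
                  ≤ ENNReal.ofReal (g x) + ENNReal.ofReal ε * ENNReal.ofReal 0 := hbound
                _ ≤ ENNReal.ofReal (g x) + ENNReal.ofReal (2 * (ε * vmax)) := by
                    gcongr
                    simp
            · intro y _ _
              refine (hgM y).trans ?_
              rw [hgx]
              exact max_le le_rfl (by linarith)
            · intro y _
              rw [add_zero]
              refine (hgM y).trans ?_
              rw [hgx]
              exact max_le le_rfl (by linarith)
        · have hxS : x ∉ S := fun h => hxA h.2.1
          rw [Set.indicator_of_notMem hxS, add_zero]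
          by_cases hxC : a - vwhp < Φ x
          · -- slab case
            have hxslab : x ∈ slab := ⟨hxC, hxA⟩
            rw [Set.indicator_of_mem hxslab]
            have hbound := helper_bound (P x) g {y | vwhp ≤ Φ y - Φ x} {y | vmax < Φ y - Φ x}
              (measurableSet_le measurable_const (hΦmeas.sub measurable_const)) (h3 x)
              (c := g x + vwhp) (d := vmax) (by linarith [hg0 x]) (le_of_lt hvmax0)
              (h1 x hxG) ?_ ?_
            · calc ∫⁻ y, ENNReal.ofReal (g y) ∂(P x)
                  ≤ ENNReal.ofReal (g x + vwhp) + ENNReal.ofReal ε * ENNReal.ofReal vmax :=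
                    hbound
                _ ≤ ENNReal.ofReal (g x) + ENNReal.ofReal vwhp
                      + ENNReal.ofReal (2 * (ε * vmax)) := by
                    rw [ENNReal.ofReal_add (hg0 x) (le_of_lt hv0)]
                    gcongr
                    rw [← ENNReal.ofReal_mul hε]
                    exact ENNReal.ofReal_le_ofReal (by nlinarith)
            · intro y hyB _
              have hy : Φ y ≤ Φ x + vwhp := by
                simp only [Set.mem_setOf_eq, not_le] at hyB; linarith
              exact glip x y vwhp (le_of_lt hv0) hy
            · intro y hyN
              have hy : Φ y ≤ Φ x + vmax := by
                simp only [Set.mem_setOf_eq, not_lt] at hyN; linarith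
              have := glip x y vmax (le_of_lt hvmax0) hy
              linarith
          · -- low case
            have hxslab : x ∉ slab := fun h => hxC h.1
            rw [Set.indicator_of_notMem hxslab, add_zero]
            have hbound := helper_bound (P x) g {y | vwhp ≤ Φ y - Φ x} {y | vmax < Φ y - Φ x}
              (measurableSet_le measurable_const (hΦmeas.sub measurable_const)) (h3 x)
              (c := g x) (d := vmax) (hg0 x) (le_of_lt hvmax0)
              (h1 x hxG) ?_ ?_
            · calc ∫⁻ y, ENNReal.ofReal (g y) ∂(P x)
                  ≤ ENNReal.ofReal (g x) + ENNReal.ofReal ε * ENNReal.ofReal vmax := hbound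
                _ ≤ ENNReal.ofReal (g x) + ENNReal.ofReal (2 * (ε * vmax)) := by
                    gcongr
                    rw [← ENNReal.ofReal_mul hε]
                    exact ENNReal.ofReal_le_ofReal (by nlinarith)
            · intro y hyB _
              have hy : Φ y < Φ x + vwhp := by
                simp only [Set.mem_setOf_eq, not_le] at hyB; linarith
              have hxlow : ¬ (a - vwhp < Φ x) := hxC
              push_neg at hxlow
              apply max_le
              · have := min_le_left (Φ y) M
                linarith [hg0 x]
              · exact hg0 x
            · intro y hyN
              have hy : Φ y ≤ Φ x + vmax := by
                simp only [Set.mem_setOf_eq, not_lt] at hyN; linarith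
              exact glip x y vmax (le_of_lt hvmax0) hy
      · -- outside G
        have hxS : x ∉ S := fun h => hxG h.1
        rw [Set.indicator_of_notMem hxS, add_zero,
          Set.indicator_of_mem (by simpa using hxG : x ∈ Gᶜ)]
        have hbound := helper_bound (P x) g ∅ {y | vmax < Φ y - Φ x}
          MeasurableSet.empty (h3 x) (ε := ε) (c := g x + vmax) (d := 0)
          (by linarith [hg0 x]) le_rfl (by simp) ?_ ?_
        · calc ∫⁻ y, ENNReal.ofReal (g y) ∂(P x)
              ≤ ENNReal.ofReal (g x + vmax) + ENNReal.ofReal ε * ENNReal.ofReal 0 := hbound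
            _ = ENNReal.ofReal (g x) + ENNReal.ofReal vmax := by
                rw [ENNReal.ofReal_add (hg0 x) (le_of_lt hvmax0)]
                simp
            _ ≤ _ := by
                gcongr
                calc ENNReal.ofReal (g x) ≤ ENNReal.ofReal (g x)
                      + slab.indicator (fun _ => ENNReal.ofReal vwhp) x := le_self_add
                  _ ≤ _ := le_self_add
        · intro y _ hyN
          have hy : Φ y ≤ Φ x + vmax := by
            simp only [Set.mem_setOf_eq, not_lt] at hyN; linarith
          exact glip x y vmax (le_of_lt hvmax0) hy
        · intro y hyN
          rw [add_zero]
          have hy : Φ y ≤ Φ x + vmax := by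
            simp only [Set.mem_setOf_eq, not_lt] at hyN; linarith
          exact glip x y vmax (le_of_lt hvmax0) hy
    -- integrate and use stationarity
    have hint := lintegral_mono (μ := μ) claim
    rw [lintegral_add_right _ (measurable_const.indicator hSmeas),
      lintegral_add_right _ (measurable_const.indicator hG.compl),
      lintegral_add_right _ measurable_const,
      lintegral_add_right _ (measurable_const.indicator hslabmeas),
      lintegral_indicator_const hSmeas, lintegral_indicator_const hslabmeas,
      lintegral_indicator_const hG.compl, lintegral_const, measure_univ, mul_one] at hint
    have hbind : ∫⁻ x, ∫⁻ y, ENNReal.ofReal (g y) ∂(P x) ∂μ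
        = ∫⁻ x, ENNReal.ofReal (g x) ∂μ := by
      conv_rhs => rw [← hinv.def]
      exact (Measure.lintegral_bind P.measurable.aemeasurable
        (ENNReal.measurable_ofReal.comp hgmeas).aemeasurable).symm
    rw [hbind] at hint
    have hfin : ∫⁻ x, ENNReal.ofReal (g x) ∂μ ≠ ⊤ := by
      have hle : ∫⁻ x, ENNReal.ofReal (g x) ∂μ ≤ ENNReal.ofReal (max (M - a) 0) :=
        calc ∫⁻ x, ENNReal.ofReal (g x) ∂μ
          ≤ ∫⁻ _, ENNReal.ofReal (max (M - a) 0) ∂μ :=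
            lintegral_mono fun x => ENNReal.ofReal_le_ofReal (hgM x)
        _ = ENNReal.ofReal (max (M - a) 0) := by
            rw [lintegral_const, measure_univ, mul_one]
      exact ne_top_of_le_ne_top ENNReal.ofReal_ne_top hle
    have hstep : ENNReal.ofReal Δ * μ S ≤ ENNReal.ofReal vwhp * μ slab
        + ENNReal.ofReal (2 * (ε * vmax)) + ENNReal.ofReal vmax * μ Gᶜ := by
      rw [add_assoc, add_assoc] at hint
      rw [add_assoc]
      exact (ENNReal.add_le_add_iff_left hfin).mp hint
    have hsub : A ⊆ S ∪ (Gᶜ ∪ {x | M < Φ x}) := by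
      intro x hx
      by_cases hxG : x ∈ G
      · by_cases hxM : Φ x ≤ M
        · exact Or.inl ⟨hxG, hx, hxM⟩
        · exact Or.inr (Or.inr (by simpa using hxM))
      · exact Or.inr (Or.inl (by simpa using hxG))
    have hAsub : μ A ≤ μ S + (μ Gᶜ + μ {x | M < Φ x}) :=
      le_trans (measure_mono hsub)
        (le_trans (measure_union_le _ _) (add_le_add_right (measure_union_le _ _) _))
    have herr : ENNReal.ofReal (2 * (ε * vmax)) + ENNReal.ofReal vmax * ENNReal.ofReal ε
        + ENNReal.ofReal vmax * ENNReal.ofReal ε ≤ ENNReal.ofReal (4 * (ε * vmax)) := by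
      rw [← ENNReal.ofReal_mul (le_of_lt hvmax0), ← ENNReal.ofReal_add (by positivity) (by positivity),
        ← ENNReal.ofReal_add (by positivity) (by positivity)]
      exact ENNReal.ofReal_le_ofReal (by nlinarith)
    calc ENNReal.ofReal Δ * μ A
        ≤ ENNReal.ofReal Δ * (μ S + (μ Gᶜ + μ {x | M < Φ x})) := mul_le_mul_right hAsub _
      _ = ENNReal.ofReal Δ * μ S + ENNReal.ofReal Δ * μ Gᶜ
          + ENNReal.ofReal Δ * μ {x | M < Φ x} := by ring
      _ ≤ (ENNReal.ofReal vwhp * μ slab + ENNReal.ofReal (2 * (ε * vmax))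
            + ENNReal.ofReal vmax * ENNReal.ofReal ε)
          + ENNReal.ofReal vmax * ENNReal.ofReal ε
          + ENNReal.ofReal vmax * μ {x | M < Φ x} :=
          add_le_add
            (add_le_add
              (hstep.trans (add_le_add_right (mul_le_mul_right hGc _) _))
              (mul_le_mul' (ENNReal.ofReal_le_ofReal (hΔv.trans hvmax)) hGc))
            (mul_le_mul_left (ENNReal.ofReal_le_ofReal (hΔv.trans hvmax)) _)
      _ = ENNReal.ofReal vwhp * μ slab
          + (ENNReal.ofReal (2 * (ε * vmax)) + ENNReal.ofReal vmax * ENNReal.ofReal ε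
            + ENNReal.ofReal vmax * ENNReal.ofReal ε)
          + ENNReal.ofReal vmax * μ {x | M < Φ x} := by ring
      _ ≤ _ := add_le_add (add_le_add_right herr _) le_rfl
  -- let the cutoff go to infinity
  have key2 : ENNReal.ofReal Δ * μ A ≤
      ENNReal.ofReal vwhp * μ slab + ENNReal.ofReal (4 * (ε * vmax)) := by
    have hsets : ∀ n : ℕ, MeasurableSet {x | (a + n : ℝ) < Φ x} :=
      fun n => measurableSet_lt measurable_const hΦmeas
    have hanti : Antitone (fun n : ℕ => {x | (a + n : ℝ) < Φ x}) := by
      intro m n hmn x hx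
      simp only [Set.mem_setOf_eq] at hx ⊢
      have : (m : ℝ) ≤ n := by exact_mod_cast hmn
      linarith
    have hiInter : (⋂ n : ℕ, {x | (a + n : ℝ) < Φ x}) = ∅ := by
      ext x
      simp only [Set.mem_iInter, Set.mem_setOf_eq, Set.mem_empty_iff_false, iff_false, not_forall,
        not_lt]
      obtain ⟨n, hn⟩ := exists_nat_gt (Φ x - a)
      exact ⟨n, by linarith⟩
    have hlim : Tendsto (fun n : ℕ => μ {x | (a + n : ℝ) < Φ x}) atTop (𝓝 0) := by
      have := tendsto_measure_iInter_atTop (μ := μ)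
        (fun n => (hsets n).nullMeasurableSet) hanti ⟨0, measure_ne_top _ _⟩
      rw [hiInter] at this
      simpa [Function.comp_def] using this
    have hlim2 : Tendsto (fun n : ℕ => ENNReal.ofReal vwhp * μ slab
        + ENNReal.ofReal (4 * (ε * vmax)) + ENNReal.ofReal vmax * μ {x | (a + n : ℝ) < Φ x})
        atTop (𝓝 (ENNReal.ofReal vwhp * μ slab + ENNReal.ofReal (4 * (ε * vmax)))) := by
      have h1' : Tendsto (fun n : ℕ => ENNReal.ofReal vmax * μ {x | (a + n : ℝ) < Φ x})
          atTop (𝓝 0) := by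
        have := ENNReal.Tendsto.const_mul (a := ENNReal.ofReal vmax) hlim (Or.inr ENNReal.ofReal_ne_top)
        simpa using this
      have := Tendsto.const_add (ENNReal.ofReal vwhp * μ slab
        + ENNReal.ofReal (4 * (ε * vmax))) h1'
      simpa using this
    refine ge_of_tendsto' hlim2 fun n => key (a + n) (le_add_of_nonneg_right (Nat.cast_nonneg n))
  -- convert to a real-number inequality
  have hCsplit : μ C = μ A + μ slab := by
    have h := measure_inter_add_diff C hAmeas (μ := μ)
    have hCA : C ∩ A = A := by
      apply Set.inter_eq_right.mpr
      intro x hx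
      simp only [hA_def, Set.mem_setOf_eq] at hx
      simp only [hC_def, Set.mem_setOf_eq]
      linarith
    rw [hCA] at h
    exact h.symm
  set α : ℝ := (μ A).toReal with hα_def
  set σ : ℝ := (μ slab).toReal with hσ_def
  have hα0 : 0 ≤ α := ENNReal.toReal_nonneg
  have hσ0 : 0 ≤ σ := ENNReal.toReal_nonneg
  have hμA : μ A = ENNReal.ofReal α := (ENNReal.ofReal_toReal (measure_ne_top μ A)).symm
  have hμslab : μ slab = ENNReal.ofReal σ := (ENNReal.ofReal_toReal (measure_ne_top μ slab)).symm
  have hreal : Δ * α ≤ vwhp * σ + 4 * (ε * vmax) := by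
    rw [hμA, hμslab, ← ENNReal.ofReal_mul hΔ0, ← ENNReal.ofReal_mul (le_of_lt hv0),
      ← ENNReal.ofReal_add (by positivity) (by positivity)] at key2
    exact (ENNReal.ofReal_le_ofReal_iff (by positivity)).mp key2
  have hgoal_real : α ≤ vwhp / (vwhp + Δ) * (α + σ) + 6 * ε * vmax / vwhp := by
    have hsum : 0 < vwhp + Δ := by linarith
    rw [div_mul_eq_mul_div, div_add_div _ _ (ne_of_gt hsum) (ne_of_gt hv0),
      le_div_iff₀ (by positivity)]
    nlinarith [mul_nonneg (mul_nonneg hε (le_of_lt hvmax0)) hΔ0,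
      mul_nonneg (mul_nonneg hε (le_of_lt hvmax0)) (le_of_lt hv0)]
  calc μ A = ENNReal.ofReal α := hμA
    _ ≤ ENNReal.ofReal (vwhp / (vwhp + Δ) * (α + σ) + 6 * ε * vmax / vwhp) :=
        ENNReal.ofReal_le_ofReal hgoal_real
    _ = ENNReal.ofReal (vwhp / (vwhp + Δ)) * ENNReal.ofReal (α + σ)
        + ENNReal.ofReal (6 * ε * vmax / vwhp) := by
        rw [ENNReal.ofReal_add (by positivity) (by positivity),
          ENNReal.ofReal_mul (by positivity)]
    _ = _ := by
        rw [hCsplit, hμA, hμslab, ← ENNReal.ofReal_add hα0 hσ0]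
end

section
/- Let Z_1, …, Z_n be nonnegative integer-valued random variables with Σ_{i=1}^n Z_i ≤ M almost surely, where M is a positive integer, and suppose that conditionally on (Z_1, …, Z_n), the random variables F_1, …, F_n are independent with F_i distributed Binomial(Z_i, θ_i), where each θ_i ≥ θ for a fixed θ ∈ (0,1]. Then for every δ ∈ (0, e^{−1}], Pr{ Σ_{i=1}^n F_i ≥ θ·Σ_{i=1}^n Z_i − √(M·ln(1/δ)) } ≥ 1 − δ². -/
open MeasureTheory ProbabilityTheory Real Finset


lemma bern_pos {p : ℝ} (hp0 : 0 ≤ p) (hp1 : p ≤ 1) (y : ℝ) :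
    0 < 1 - p + p * Real.exp y := by
  rcases eq_or_lt_of_le hp1 with h | h
  · subst h; simpa using Real.exp_pos y
  · nlinarith [Real.exp_pos y]

lemma bern_hoeffding {p : ℝ} (hp0 : 0 ≤ p) (hp1 : p ≤ 1) (x : ℝ) :
    1 - p + p * Real.exp x ≤ Real.exp (p * x + x ^ 2 / 8) := by
  set h : ℝ → ℝ := fun y => 1 - p + p * Real.exp y with hh
  have hpos : ∀ y, 0 < h y := fun y => bern_pos hp0 hp1 y
  -- derivative of h
  have hd : ∀ y, HasDerivAt h (p * Real.exp y) y := by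
    intro y
    exact ((Real.hasDerivAt_exp y).const_mul p).const_add (1 - p)
  -- g1 is deriv of g := fun y => p*y + y^2/8 - log (h y)
  set g : ℝ → ℝ := fun y => p * y + y ^ 2 / 8 - Real.log (h y) with hg
  set g1 : ℝ → ℝ := fun y => p + y / 4 - p * Real.exp y / h y with hg1
  have hgd : ∀ y, HasDerivAt g (g1 y) y := by
    intro y
    have h1 : HasDerivAt (fun y : ℝ => p * y + y ^ 2 / 8) (p + y * 2 / 8) y := by
      have := ((hasDerivAt_pow 2 y).div_const 8).const_add 0
      have h2 : HasDerivAt (fun y : ℝ => p * y) p y := by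
        simpa using (hasDerivAt_id y).const_mul p
      exact (h2.add ((hasDerivAt_pow 2 y).div_const 8)).congr_deriv (by norm_num <;> ring)
    have h3 : HasDerivAt (fun y => Real.log (h y)) (p * Real.exp y / h y) y :=
      (hd y).log (hpos y).ne'
    have := h1.sub h3
    refine this.congr_deriv ?_
    simp only [hg1]; ring
  have hg1d : ∀ y, HasDerivAt g1 (1/4 - p * Real.exp y * (1 - p) / (h y) ^ 2) y := by
    intro y
    have hdiv : HasDerivAt (fun y => p * Real.exp y / h y)
        ((p * Real.exp y * h y - p * Real.exp y * (p * Real.exp y)) / (h y) ^ 2) y :=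
      ((Real.hasDerivAt_exp y).const_mul p).div (hd y) (hpos y).ne'
    have h1 : HasDerivAt (fun y : ℝ => p + y / 4) (1/4) y := by
      simpa using ((hasDerivAt_id y).div_const 4).const_add p
    have := h1.sub hdiv
    refine this.congr_deriv ?_
    have : p * Real.exp y * h y - p * Real.exp y * (p * Real.exp y)
        = p * Real.exp y * (1 - p) := by simp only [hh]; ring
    rw [this]
  have hg1nonneg : ∀ y, 0 ≤ 1/4 - p * Real.exp y * (1 - p) / (h y) ^ 2 := by
    intro y
    have h2 : (0:ℝ) < (h y)^2 := pow_pos (hpos y) 2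
    rw [sub_nonneg, div_le_iff₀ h2]
    have he := Real.exp_pos y
    nlinarith [sq_nonneg ((1 - p) - p * Real.exp y)]
  have hg1mono : Monotone g1 := by
    apply monotone_of_deriv_nonneg
    · exact fun y => (hg1d y).differentiableAt
    · intro y; rw [(hg1d y).deriv]; exact hg1nonneg y
  have hg1zero : g1 0 = 0 := by
    simp only [hg1, hh]
    norm_num
  have hgzero : g 0 = 0 := by
    simp only [hg, hh]
    norm_num
  have hgderiv : ∀ y, deriv g y = g1 y := fun y => (hgd y).deriv
  have hgcont : Continuous g := by
    have : Differentiable ℝ g := fun y => (hgd y).differentiableAt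
    exact this.continuous
  have key : 0 ≤ g x := by
    rcases le_or_gt 0 x with hx | hx
    · have hmono : MonotoneOn g (Set.Ici 0) := by
        apply monotoneOn_of_deriv_nonneg (convex_Ici 0) hgcont.continuousOn
          (fun y _ => (hgd y).differentiableAt.differentiableWithinAt)
        intro y hy
        rw [hgderiv y, ← hg1zero]
        exact hg1mono (le_of_lt (by simpa using hy))
      have := hmono (Set.self_mem_Ici) (Set.mem_Ici.mpr hx) hx
      rwa [hgzero] at this
    · have hanti : AntitoneOn g (Set.Iic 0) := by
        apply antitoneOn_of_deriv_nonpos (convex_Iic 0) hgcont.continuousOn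
          (fun y _ => (hgd y).differentiableAt.differentiableWithinAt)
        intro y hy
        rw [hgderiv y, ← hg1zero]
        exact hg1mono (le_of_lt (by simpa using hy))
      have := hanti (Set.mem_Iic.mpr hx.le) (Set.self_mem_Iic) hx.le
      rwa [hgzero] at this
  have : Real.log (h x) ≤ p * x + x ^ 2 / 8 := by
    simp only [hg] at key; linarith
  calc h x = Real.exp (Real.log (h x)) := (Real.exp_log (hpos x)).symm
    _ ≤ _ := Real.exp_le_exp.mpr this

lemma chernoff_sum {n M : ℕ} (hM : 0 < M) {z : Fin n → ℕ} (hmM : (∑ i, z i) ≤ M)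
    {θ : ℝ} {θi : Fin n → ℝ} (hθ0 : 0 < θ) (hθ1 : θ ≤ 1)
    (hθi : ∀ i, θ ≤ θi i) (hθi1 : ∀ i, θi i ≤ 1)
    {δ : ℝ} (hδ0 : 0 < δ) (hδ1 : δ ≤ Real.exp (-1)) :
    ∑ f ∈ Fintype.piFinset (fun i => Finset.range (z i + 1)),
      (∏ i, ((z i).choose (f i) : ℝ) * θi i ^ (f i) * (1 - θi i) ^ (z i - f i)) *
        Real.exp ((4 * Real.sqrt ((M : ℝ) * Real.log (1 / δ)) / M) *
          ((θ * ∑ i, (z i : ℝ) - Real.sqrt ((M : ℝ) * Real.log (1 / δ))) - ∑ i, (f i : ℝ)))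
      ≤ δ ^ 2 := by
  have hlog : 1 ≤ Real.log (1 / δ) := by
    rw [Real.log_div one_ne_zero hδ0.ne', Real.log_one]
    have : Real.log δ ≤ -1 := by
      calc Real.log δ ≤ Real.log (Real.exp (-1)) := Real.log_le_log hδ0 hδ1
        _ = -1 := Real.log_exp _
    linarith
  set L : ℝ := Real.log (1 / δ) with hL
  set t : ℝ := Real.sqrt ((M : ℝ) * L) with ht
  set l : ℝ := 4 * t / M with hl
  have hMpos : (0:ℝ) < M := by exact_mod_cast hM
  have hML : (0:ℝ) ≤ (M:ℝ) * L := by positivity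
  have ht2 : t ^ 2 = (M : ℝ) * L := Real.sq_sqrt hML
  have htpos : 0 < t := Real.sqrt_pos.mpr (by nlinarith)
  have hlpos : 0 < l := by positivity
  set c : ℝ := θ * ∑ i, (z i : ℝ) - t with hc
  have hθipos : ∀ i, (0:ℝ) ≤ θi i := fun i => le_trans hθ0.le (hθi i)
  -- rewrite the summand as exp (l*c) * ∏ ...
  have hrw : ∀ f ∈ Fintype.piFinset (fun i => Finset.range (z i + 1)),
      (∏ i, ((z i).choose (f i) : ℝ) * θi i ^ (f i) * (1 - θi i) ^ (z i - f i)) *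
        Real.exp (l * (c - ∑ i, (f i : ℝ)))
      = Real.exp (l * c) * ∏ i, (((z i).choose (f i) : ℝ) * (θi i * Real.exp (-l)) ^ (f i)
          * (1 - θi i) ^ (z i - f i)) := by
    intro f _
    have h1 : Real.exp (l * (c - ∑ i, (f i : ℝ)))
        = Real.exp (l * c) * ∏ i, Real.exp (-l * (f i : ℝ)) := by
      rw [← Real.exp_sum, ← Real.exp_add]
      congr 1
      simp only [sub_eq_add_neg, ← Finset.sum_neg_distrib, mul_add, Finset.mul_sum, mul_neg,
        neg_mul]
    rw [h1, ← mul_assoc, mul_comm _ (Real.exp (l*c)), mul_assoc, ← Finset.prod_mul_distrib]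
    congr 1
    apply Finset.prod_congr rfl
    intro i _
    have : Real.exp (-l * (f i : ℝ)) = Real.exp (-l) ^ (f i) := by
      rw [← Real.exp_nat_mul]; ring_nf
    rw [this, mul_pow]
    ring
  rw [Finset.sum_congr rfl hrw, ← Finset.mul_sum]
  have hpus := Finset.prod_univ_sum (fun i => Finset.range (z i + 1))
    (fun i k => ((z i).choose k : ℝ) * (θi i * Real.exp (-l)) ^ k * (1 - θi i) ^ (z i - k))
  rw [← hpus]
  -- binomial theorem per coordinate
  have hbin : ∀ i, ∑ k ∈ Finset.range (z i + 1),
      (((z i).choose k : ℝ) * (θi i * Real.exp (-l)) ^ k * (1 - θi i) ^ (z i - k))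
      = (θi i * Real.exp (-l) + (1 - θi i)) ^ (z i) := by
    intro i
    rw [add_pow]
    apply Finset.sum_congr rfl
    intro k _
    ring
  rw [Finset.prod_congr rfl (fun i _ => hbin i)]
  -- Hoeffding bound per factor
  have hfac : ∀ i, (θi i * Real.exp (-l) + (1 - θi i)) ^ (z i)
      ≤ Real.exp ((z i : ℝ) * (θi i * (-l) + l ^ 2 / 8)) := by
    intro i
    have hb := bern_hoeffding (hθipos i) (hθi1 i) (-l)
    have hb' : θi i * Real.exp (-l) + (1 - θi i) ≤ Real.exp (θi i * (-l) + (-l) ^ 2 / 8) := by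
      linarith
    calc (θi i * Real.exp (-l) + (1 - θi i)) ^ (z i)
        ≤ (Real.exp (θi i * (-l) + (-l) ^ 2 / 8)) ^ (z i) := by
          apply pow_le_pow_left₀ (by nlinarith [Real.exp_pos (-l), hθipos i, hθi1 i]) hb'
      _ = Real.exp ((z i : ℝ) * (θi i * (-l) + l ^ 2 / 8)) := by
          rw [← Real.exp_nat_mul]; ring_nf
  have hprodle : ∏ i, (θi i * Real.exp (-l) + (1 - θi i)) ^ (z i)
      ≤ ∏ i, Real.exp ((z i : ℝ) * (θi i * (-l) + l ^ 2 / 8)) := by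
    apply Finset.prod_le_prod
    · intro i _; exact pow_nonneg (by nlinarith [Real.exp_pos (-l), hθipos i, hθi1 i]) _
    · intro i _; exact hfac i
  rw [← Real.exp_sum] at hprodle
  have hfinal : Real.exp (l * c) *
      Real.exp (∑ i, (z i : ℝ) * (θi i * (-l) + l ^ 2 / 8)) ≤ δ ^ 2 := by
    rw [← Real.exp_add]
    have hδsq : Real.exp (2 * Real.log δ) = δ ^ 2 := by
      rw [two_mul, Real.exp_add, Real.exp_log hδ0]; ring
    rw [← hδsq]
    apply Real.exp_le_exp.mpr
    have hsz : (∑ i, (z i : ℝ)) ≤ (M : ℝ) := by exact_mod_cast hmM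
    have hsz0 : (0:ℝ) ≤ ∑ i, (z i : ℝ) := by positivity
    have hθz : θ * (∑ i, (z i : ℝ)) ≤ ∑ i, θi i * (z i : ℝ) := by
      rw [Finset.mul_sum]
      apply Finset.sum_le_sum
      intro i _
      exact mul_le_mul_of_nonneg_right (hθi i) (Nat.cast_nonneg _)
    have hexp : ∑ i, (z i : ℝ) * (θi i * (-l) + l ^ 2 / 8)
        = -(l * (∑ i, θi i * (z i : ℝ))) + l ^ 2 / 8 * (∑ i, (z i : ℝ)) := by
      rw [Finset.mul_sum, Finset.mul_sum, ← Finset.sum_neg_distrib, ← Finset.sum_add_distrib]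
      exact Finset.sum_congr rfl (fun i _ => by ring)
    rw [hexp, hc]
    have hMne : (M:ℝ) ≠ 0 := hMpos.ne'
    have hlt : l * t = 4 * L := by
      have h' : l * t = 4 * t ^ 2 / M := by rw [hl]; ring
      rw [h', ht2, mul_comm ((M:ℝ)) L, mul_div_assoc, mul_div_assoc,
        div_self hMne, mul_one]
    have hl2M : l ^ 2 / 8 * (M : ℝ) = 2 * L := by
      have h' : l ^ 2 / 8 * (M : ℝ) = 2 * t ^ 2 / M := by
        rw [hl]; field_simp; ring
      rw [h', ht2, mul_comm ((M:ℝ)) L, mul_div_assoc, mul_div_assoc,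
        div_self hMne, mul_one]
    have hlogδ : Real.log δ = -L := by
      rw [hL, one_div, Real.log_inv]; ring
    have h1 : l * (θ * (∑ i, (z i : ℝ))) ≤ l * (∑ i, θi i * (z i : ℝ)) :=
      mul_le_mul_of_nonneg_left hθz hlpos.le
    have h2 : l ^ 2 / 8 * (∑ i, (z i : ℝ)) ≤ l ^ 2 / 8 * (M : ℝ) :=
      mul_le_mul_of_nonneg_left hsz (by positivity)
    rw [mul_sub]
    linarith [h1, h2, hlt, hl2M, hlogδ]
  calc Real.exp (l * c) * ∏ i, (θi i * Real.exp (-l) + (1 - θi i)) ^ (z i)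
      ≤ Real.exp (l * c) * Real.exp (∑ i, (z i : ℝ) * (θi i * (-l) + l ^ 2 / 8)) := by
        apply mul_le_mul_of_nonneg_left hprodle (Real.exp_pos _).le
    _ ≤ δ ^ 2 := hfinal

/-- Let `Z_1, …, Z_n` be nonnegative integer-valued random variables with
`Σ_i Z_i ≤ M` almost surely (`M` a positive integer), and suppose that, conditionally on
`(Z_1, …, Z_n)`, the random variables `F_1, …, F_n` are independent with `F_i`
distributed `Binomial(Z_i, θ_i)` (encoded by: conditionally on any value `z` of `Z`
with positive probability, the joint conditional law of `(F_1, …, F_n)` is the product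
of the binomial pmfs), where each `θ_i ≥ θ` for a fixed `θ ∈ (0,1]`. Then for every
`δ ∈ (0, e^{−1}]`,
`Pr{ Σ_i F_i ≥ θ·Σ_i Z_i − √(M·ln(1/δ)) } ≥ 1 − δ²`. -/
theorem binomial_abandonment_bound
    {Ω : Type*} [MeasurableSpace Ω] (μ : Measure Ω) [IsProbabilityMeasure μ]
    (n : ℕ) (M : ℕ) (hM : 0 < M)
    (Z F : Fin n → Ω → ℕ)
    (hZmeas : ∀ i, Measurable (Z i)) (hFmeas : ∀ i, Measurable (F i))
    (hsum : ∀ᵐ ω ∂μ, ∑ i, Z i ω ≤ M)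
    (θ : ℝ) (θi : Fin n → ℝ) (hθ0 : 0 < θ) (hθ1 : θ ≤ 1)
    (hθi : ∀ i, θ ≤ θi i) (hθi1 : ∀ i, θi i ≤ 1)
    (hcond : ∀ z : Fin n → ℕ, μ {ω | ∀ i, Z i ω = z i} ≠ 0 →
      ∀ f : Fin n → ℕ,
        (μ[|{ω | ∀ i, Z i ω = z i}]) {ω | ∀ i, F i ω = f i} =
          ENNReal.ofReal
            (∏ i, ((z i).choose (f i) : ℝ) * θi i ^ (f i) * (1 - θi i) ^ (z i - f i)))
    (δ : ℝ) (hδ0 : 0 < δ) (hδ1 : δ ≤ Real.exp (-1)) :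
    ENNReal.ofReal (1 - δ ^ 2) ≤
      μ {ω | θ * ∑ i, (Z i ω : ℝ) - Real.sqrt ((M : ℝ) * Real.log (1 / δ)) ≤
        ∑ i, (F i ω : ℝ)} := by
  classical
  set t : ℝ := Real.sqrt ((M : ℝ) * Real.log (1 / δ)) with ht
  set l : ℝ := 4 * t / M with hl
  have hδ1' : δ < 1 := lt_of_le_of_lt hδ1 (by
    rw [← Real.exp_zero]; exact Real.exp_lt_exp.mpr (by norm_num))
  have hlog1 : 1 ≤ Real.log (1 / δ) := by
    rw [Real.log_div one_ne_zero hδ0.ne', Real.log_one]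
    have : Real.log δ ≤ -1 := by
      calc Real.log δ ≤ Real.log (Real.exp (-1)) := Real.log_le_log hδ0 hδ1
        _ = -1 := Real.log_exp _
    linarith
  have hMpos : (0:ℝ) < M := by exact_mod_cast hM
  have htpos : 0 < t := Real.sqrt_pos.mpr (by nlinarith)
  have hlpos : 0 < l := by rw [hl]; positivity
  have hθipos : ∀ i, (0:ℝ) ≤ θi i := fun i => le_trans hθ0.le (hθi i)
  -- measurability of basic sets
  have hmeasZset : ∀ z : Fin n → ℕ, MeasurableSet {ω | ∀ i, Z i ω = z i} := by
    intro z
    have : {ω | ∀ i, Z i ω = z i} = ⋂ i, (Z i) ⁻¹' {z i} := by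
      ext ω; simp [Set.mem_iInter]
    rw [this]
    exact MeasurableSet.iInter fun i => (hZmeas i) (measurableSet_singleton _)
  have hmeasFset : ∀ f : Fin n → ℕ, MeasurableSet {ω | ∀ i, F i ω = f i} := by
    intro f
    have : {ω | ∀ i, F i ω = f i} = ⋂ i, (F i) ⁻¹' {f i} := by
      ext ω; simp [Set.mem_iInter]
    rw [this]
    exact MeasurableSet.iInter fun i => (hFmeas i) (measurableSet_singleton _)
  have hmeasSumZ : Measurable (fun ω => ∑ i, (Z i ω : ℝ)) :=
    Finset.measurable_sum _ (fun i _ => measurable_from_top.comp (hZmeas i))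
  have hmeasSumF : Measurable (fun ω => ∑ i, (F i ω : ℝ)) :=
    Finset.measurable_sum _ (fun i _ => measurable_from_top.comp (hFmeas i))
  set A : Set Ω := {ω | θ * ∑ i, (Z i ω : ℝ) - t ≤ ∑ i, (F i ω : ℝ)} with hA
  have hmeasA : MeasurableSet A :=
    measurableSet_le ((hmeasSumZ.const_mul θ).sub measurable_const) hmeasSumF
  -- the key bound on the complement
  have hw : ∀ (z f : Fin n → ℕ),
      0 ≤ ∏ i, ((z i).choose (f i) : ℝ) * θi i ^ (f i) * (1 - θi i) ^ (z i - f i) := by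
    intro z f
    apply Finset.prod_nonneg
    intro i _
    have h1 : (0:ℝ) ≤ 1 - θi i := by linarith [hθi1 i]
    exact mul_nonneg (mul_nonneg (Nat.cast_nonneg _) (pow_nonneg (hθipos i) _))
      (pow_nonneg h1 _)
  have key : μ Aᶜ ≤ ENNReal.ofReal (δ ^ 2) := by
    have hAc : Aᶜ = {ω | ∑ i, (F i ω : ℝ) < θ * ∑ i, (Z i ω : ℝ) - t} := by
      ext ω
      simp only [hA, Set.mem_compl_iff, Set.mem_setOf_eq, not_le]
    have hmeasAc : MeasurableSet Aᶜ := hmeasA.compl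
    -- decompose over values of Z
    have hcover : Aᶜ = ⋃ z : Fin n → ℕ, ({ω | ∀ i, Z i ω = z i} ∩ Aᶜ) := by
      ext ω
      simp only [Set.mem_iUnion, Set.mem_inter_iff, Set.mem_setOf_eq]
      constructor
      · intro h; exact ⟨fun i => Z i ω, fun i => rfl, h⟩
      · rintro ⟨z, _, h⟩; exact h
    have hdisjZ : Pairwise (Function.onFun Disjoint fun z : Fin n → ℕ =>
        ({ω | ∀ i, Z i ω = z i} ∩ Aᶜ)) := by
      intro z z' hzz
      apply Set.disjoint_left.mpr
      rintro ω ⟨h1, _⟩ ⟨h2, _⟩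
      exact hzz (funext fun i => (h1 i).symm.trans (h2 i))
    rw [hcover, measure_iUnion hdisjZ (fun z => (hmeasZset z).inter hmeasAc)]
    -- per-z bound
    have hperz : ∀ z : Fin n → ℕ,
        μ ({ω | ∀ i, Z i ω = z i} ∩ Aᶜ) ≤ μ {ω | ∀ i, Z i ω = z i} * ENNReal.ofReal (δ ^ 2) := by
      intro z
      by_cases hz : μ {ω | ∀ i, Z i ω = z i} = 0
      · calc μ ({ω | ∀ i, Z i ω = z i} ∩ Aᶜ) ≤ μ {ω | ∀ i, Z i ω = z i} :=
              measure_mono Set.inter_subset_left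
          _ = 0 := hz
          _ ≤ _ := zero_le
      · -- positive probability valuez; first, ∑ z ≤ M
        have hzM : (∑ i, z i) ≤ M := by
          by_contra hcon
          apply hz
          apply measure_mono_null _ (ae_iff.mp hsum)
          intro ω hω
          simp only [Set.mem_setOf_eq] at hω ⊢
          have hsc : ∑ i, Z i ω = ∑ i, z i := Finset.sum_congr rfl (fun i _ => hω i)
          omega
        set s : Set Ω := {ω | ∀ i, Z i ω = z i} with hs
        set Bz : Set Ω := {ω | ∑ i, (F i ω : ℝ) < θ * ∑ i, (z i : ℝ) - t} with hBz
        have hsub : s ∩ Aᶜ ⊆ s ∩ Bz := by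
          rintro ω ⟨h1, h2⟩
          refine ⟨h1, ?_⟩
          rw [hAc] at h2
          simp only [Set.mem_setOf_eq] at h2 ⊢
          have : ∑ i, ((Z i ω : ℝ)) = ∑ i, (z i : ℝ) :=
            Finset.sum_congr rfl (fun i _ => by rw [h1 i])
          rwa [this] at h2
        have hcondBz : μ[|s] Bz ≤ ENNReal.ofReal (δ ^ 2) := by
          -- decompose Bz over values of F
          set S' : Set (Fin n → ℕ) :=
            {f | (∑ i, (f i : ℝ)) < θ * ∑ i, (z i : ℝ) - t} with hS'
          have hBzU : Bz = ⋃ f ∈ S', {ω | ∀ i, F i ω = f i} := by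
            ext ω
            simp only [hBz, hS', Set.mem_setOf_eq, Set.mem_iUnion]
            constructor
            · intro h
              exact ⟨fun i => F i ω, h, fun i => rfl⟩
            · rintro ⟨f, hf, h⟩
              have : ∑ i, ((F i ω : ℝ)) = ∑ i, (f i : ℝ) :=
                Finset.sum_congr rfl (fun i _ => by rw [h i])
              rwa [this]
          have hdisjF : S'.PairwiseDisjoint (fun f : Fin n → ℕ => {ω | ∀ i, F i ω = f i}) := by
            intro f _ g _ hfg
            apply Set.disjoint_left.mpr
            intro ω h1 h2
            simp only [Set.mem_setOf_eq] at h1 h2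
            exact hfg (funext fun i => (h1 i).symm.trans (h2 i))
          rw [hBzU, measure_biUnion S'.to_countable hdisjF (fun f _ => hmeasFset f)]
          have hval : ∀ f : S', (μ[|s]) {ω | ∀ i, F i ω = (f : Fin n → ℕ) i} =
              ENNReal.ofReal (∏ i, (((z i).choose ((f : Fin n → ℕ) i)) : ℝ) *
                θi i ^ ((f : Fin n → ℕ) i) * (1 - θi i) ^ (z i - (f : Fin n → ℕ) i)) :=
            fun f => hcond z hz (f : Fin n → ℕ)
          rw [tsum_congr hval]
          -- bound the tsum
          set w : (Fin n → ℕ) → ℝ := fun f =>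
            ∏ i, ((z i).choose (f i) : ℝ) * θi i ^ (f i) * (1 - θi i) ^ (z i - f i) with hwdef
          set g : (Fin n → ℕ) → ℝ := fun f =>
            w f * Real.exp (l * ((θ * ∑ i, (z i : ℝ) - t) - ∑ i, (f i : ℝ))) with hgdef
          have hstep1 : ∑' (f : S'), ENNReal.ofReal (w f) ≤
              ∑' (f : Fin n → ℕ), ENNReal.ofReal (g f) := by
            rw [tsum_subtype S' (fun f => ENNReal.ofReal (w f))]
            apply ENNReal.tsum_le_tsum
            intro f
            by_cases hf : f ∈ S'
            · rw [Set.indicator_of_mem hf]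
              apply ENNReal.ofReal_le_ofReal
              rw [hgdef]
              apply le_mul_of_one_le_right (hw z f)
              apply Real.one_le_exp
              have : (∑ i, (f i : ℝ)) < θ * ∑ i, (z i : ℝ) - t := hf
              nlinarith [hlpos]
            · rw [Set.indicator_of_notMem hf]
              exact zero_le
          have hstep2 : ∑' (f : Fin n → ℕ), ENNReal.ofReal (g f) =
              ∑ f ∈ Fintype.piFinset (fun i => Finset.range (z i + 1)),
                ENNReal.ofReal (g f) := by
            apply tsum_eq_sum
            intro f hf
            rw [Fintype.mem_piFinset] at hf
            push_neg at hf
            obtain ⟨i, hi⟩ := hf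
            rw [Finset.mem_range] at hi
            push_neg at hi
            have hzero : w f = 0 := by
              rw [hwdef]
              apply Finset.prod_eq_zero (Finset.mem_univ i)
              rw [Nat.choose_eq_zero_of_lt (by omega)]
              simp
            rw [hgdef]
            simp only [hzero, zero_mul, ENNReal.ofReal_zero]
          have hstep3 : ∑ f ∈ Fintype.piFinset (fun i => Finset.range (z i + 1)),
              ENNReal.ofReal (g f) = ENNReal.ofReal
                (∑ f ∈ Fintype.piFinset (fun i => Finset.range (z i + 1)), g f) := by
            rw [ENNReal.ofReal_sum_of_nonneg]
            intro f _
            rw [hgdef]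
            exact mul_nonneg (hw z f) (Real.exp_pos _).le
          calc ∑' (f : S'), ENNReal.ofReal (w (f : Fin n → ℕ))
              ≤ ∑' (f : Fin n → ℕ), ENNReal.ofReal (g f) := hstep1
            _ = _ := hstep2
            _ = _ := hstep3
            _ ≤ ENNReal.ofReal (δ ^ 2) := by
                apply ENNReal.ofReal_le_ofReal
                have := chernoff_sum hM hzM hθ0 hθ1 hθi hθi1 hδ0 hδ1 (z := z)
                convert this using 1
        have hsne : μ s ≠ ⊤ := measure_ne_top μ s
        calc μ (s ∩ Aᶜ) ≤ μ (s ∩ Bz) := measure_mono hsub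
          _ = μ s * (μ[|s]) Bz := by
              rw [cond_apply (hmeasZset z), ← mul_assoc, ENNReal.mul_inv_cancel hz hsne,
                one_mul]
          _ ≤ μ s * ENNReal.ofReal (δ ^ 2) :=
              mul_le_mul_right hcondBz _
    calc ∑' z : Fin n → ℕ, μ ({ω | ∀ i, Z i ω = z i} ∩ Aᶜ)
        ≤ ∑' z : Fin n → ℕ, μ {ω | ∀ i, Z i ω = z i} * ENNReal.ofReal (δ ^ 2) :=
          ENNReal.tsum_le_tsum hperz
      _ = (∑' z : Fin n → ℕ, μ {ω | ∀ i, Z i ω = z i}) * ENNReal.ofReal (δ ^ 2) :=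
          ENNReal.tsum_mul_right
      _ ≤ 1 * ENNReal.ofReal (δ ^ 2) := by
          apply mul_le_mul_left
          have hdisj : Pairwise (Function.onFun Disjoint fun z : Fin n → ℕ =>
              {ω | ∀ i, Z i ω = z i}) := by
            intro z z' hzz
            apply Set.disjoint_left.mpr
            intro ω h1 h2
            exact hzz (funext fun i => (h1 i).symm.trans (h2 i))
          rw [← measure_iUnion hdisj hmeasZset]
          exact prob_le_one
      _ = ENNReal.ofReal (δ ^ 2) := one_mul _
  -- conclude
  have hAe : μ A = 1 - μ Aᶜ := by
    have h2 := prob_compl_eq_one_sub (μ := μ) hmeasA.compl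
    rwa [compl_compl] at h2
  show ENNReal.ofReal (1 - δ ^ 2) ≤ μ A
  rw [hAe]
  have h1 : ENNReal.ofReal (1 - δ ^ 2) = 1 - ENNReal.ofReal (δ ^ 2) := by
    rw [ENNReal.ofReal_sub _ (by positivity), ENNReal.ofReal_one]
  rw [h1]
  exact tsub_le_tsub_left key 1
end
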